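/- arXiv:1205.6974 — 3 statements merged into one kernel-verified Lean document; each statement's English description precedes it below -/
import Mathlib

section
/- Let x^∞ be a sequence over a finite alphabet 𝒳. Then liminf_{k→∞} liminf_{n→∞} (1/k) Ĥ^k_sw(x^n) ≤ liminf_{k→∞} liminf_{n→∞} (1/k) Ĥ^k(x^n) and limsup_{k→∞} limsup_{n→∞} (1/k) Ĥ^k_sw(x^n) ≤ limsup_{k→∞} limsup_{n→∞} (1/k) Ĥ^k(x^n); that is, the best-case and worst-case sliding-window compressibilities are upper-bounded by the corresponding block-by-block quantities. -/
open Filter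

/-- Base-2 Shannon entropy of a finitely-supported distribution given as a function. -/
noncomputable def ent2 {β : Type*} [Fintype β] (q : β → ℝ) : ℝ :=
  ∑ b, -(q b * Real.logb 2 (q b))

/-- The `k`-th order block-by-block empirical distribution of `x^n`: the fraction of the
`⌊n/k⌋` disjoint `k`-blocks of `x^n` equal to a given word `w`. -/
noncomputable def blockDist {𝒳 : Type*} [DecidableEq 𝒳] (x : ℕ → 𝒳) (k n : ℕ)
    (w : Fin k → 𝒳) : ℝ :=
  (((Finset.range (n / k)).filter
      (fun i => (fun j : Fin k => x (k * i + (j : ℕ))) = w)).card : ℝ) / ((n / k : ℕ) : ℝ)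

/-- The `k`-th order block-by-block empirical entropy `Ĥ^k(x^n)` (base 2). -/
noncomputable def Hblock {𝒳 : Type*} [Fintype 𝒳] [DecidableEq 𝒳] (x : ℕ → 𝒳) (k n : ℕ) : ℝ :=
  ent2 (blockDist x k n)

/-- The `k`-th order sliding-window empirical distribution of `x^n`: the fraction of the
`n−k+1` length-`k` windows of `x^n` equal to a given word `w`. -/
noncomputable def swDist {𝒳 : Type*} [DecidableEq 𝒳] (x : ℕ → 𝒳) (k n : ℕ)
    (w : Fin k → 𝒳) : ℝ :=
  (((Finset.range (n - k + 1)).filter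
      (fun i => (fun j : Fin k => x (i + (j : ℕ))) = w)).card : ℝ) / ((n - k + 1 : ℕ) : ℝ)

/-- The `k`-th order sliding-window empirical entropy `Ĥ^k_sw(x^n)` (base 2). -/
noncomputable def Hsw {𝒳 : Type*} [Fintype 𝒳] [DecidableEq 𝒳] (x : ℕ → 𝒳) (k n : ℕ) : ℝ :=
  ent2 (swDist x k n)


set_option linter.unusedSectionVars false
set_option maxHeartbeats 1000000
open Filter Finset
namespace SLB
variable {β : Type*} {γ : Type*} [Fintype β] [DecidableEq β] [Fintype γ] [DecidableEq γ]


variable {β : Type*} {γ : Type*} [Fintype β] [DecidableEq β] [Fintype γ] [DecidableEq γ]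

/-- empirical law of `g` on `range N`. -/
noncomputable def law (g : ℕ → β) (N : ℕ) (b : β) : ℝ :=
  (((Finset.range N).filter (fun i => g i = b)).card : ℝ) / N

/-- natural-log entropy -/
noncomputable def entN (q : β → ℝ) : ℝ := ∑ b, -(q b * Real.log (q b))

lemma law_nonneg (g : ℕ → β) (N : ℕ) (b : β) : 0 ≤ law g N b := by
  unfold law; positivity

lemma law_le_one (g : ℕ → β) (N : ℕ) (b : β) : law g N b ≤ 1 := by
  unfold law
  rcases Nat.eq_zero_or_pos N with h | h
  · simp [h]
  · rw [div_le_one (by exact_mod_cast h)]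
    exact_mod_cast Finset.card_le_card (Finset.filter_subset _ _) |>.trans (le_of_eq (Finset.card_range N))

lemma law_sum (g : ℕ → β) {N : ℕ} (hN : 0 < N) : ∑ b, law g N b = 1 := by
  unfold law
  rw [← Finset.sum_div, div_eq_one_iff_eq (by exact_mod_cast hN.ne')]
  norm_cast
  rw [← Finset.card_eq_sum_card_fiberwise (f := g) (s := Finset.range N) (t := Finset.univ)
    (fun x _ => Finset.mem_univ _)]
  exact Finset.card_range N

/-- Gibbs-type inequality. -/
lemma gibbs (p q : β → ℝ) (hp : ∀ b, 0 ≤ p b) (hq : ∀ b, 0 ≤ q b)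
    (hpq : ∀ b, p b ≠ 0 → q b ≠ 0) (hp1 : ∑ b, p b = 1) (hq1 : ∑ b, q b ≤ 1) :
    entN p ≤ ∑ b, -(p b * Real.log (q b)) := by
  have key : ∀ b, p b * Real.log (q b) - p b * Real.log (p b) ≤ q b - p b := by
    intro b
    rcases eq_or_lt_of_le (hp b) with h0 | h0
    · simp [← h0]; exact hq b
    · have hqb : 0 < q b := lt_of_le_of_ne (hq b) (Ne.symm (hpq b h0.ne'))
      have : Real.log (q b) - Real.log (p b) = Real.log (q b / p b) :=
        (Real.log_div hqb.ne' h0.ne').symm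
      rw [← mul_sub, this]
      have hlog : Real.log (q b / p b) ≤ q b / p b - 1 :=
        Real.log_le_sub_one_of_pos (div_pos hqb h0)
      calc p b * Real.log (q b / p b) ≤ p b * (q b / p b - 1) := by
            exact mul_le_mul_of_nonneg_left hlog (hp b)
        _ = q b - p b := by field_simp
  have hsum : ∑ b, (p b * Real.log (q b) - p b * Real.log (p b)) ≤ 0 := by
    calc ∑ b, (p b * Real.log (q b) - p b * Real.log (p b)) ≤ ∑ b, (q b - p b) :=
          Finset.sum_le_sum (fun b _ => key b)
      _ = (∑ b, q b) - 1 := by rw [Finset.sum_sub_distrib, hp1]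
      _ ≤ 0 := by linarith
  unfold entN
  have heq : ∑ b, -(p b * Real.log (p b)) - ∑ b, -(p b * Real.log (q b))
      = ∑ b, (p b * Real.log (q b) - p b * Real.log (p b)) := by
    rw [← Finset.sum_sub_distrib]
    exact Finset.sum_congr rfl (fun b _ => by ring)
  linarith [heq ▸ hsum]

lemma entN_le_log_card (p : β → ℝ) (hp : ∀ b, 0 ≤ p b) (hp1 : ∑ b, p b = 1) :
    entN p ≤ Real.log (Fintype.card β) := by
  have hcard : 0 < Fintype.card β := by
    rcases Nat.eq_zero_or_pos (Fintype.card β) with h | h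
    · exfalso
      have : (Finset.univ : Finset β) = ∅ := Finset.card_eq_zero.mp h
      rw [this] at hp1; simp at hp1
    · exact h
  have hc : (0:ℝ) < (Fintype.card β : ℝ) := by exact_mod_cast hcard
  have := gibbs p (fun _ => (Fintype.card β : ℝ)⁻¹) hp (fun _ => by positivity)
    (fun b _ => by positivity) hp1 (by
      rw [Finset.sum_const, Finset.card_univ, nsmul_eq_mul, mul_inv_cancel₀ hc.ne'])
  refine this.trans (le_of_eq ?_)
  simp only [Real.log_inv, mul_neg, neg_neg]
  rw [← Finset.sum_mul, hp1, one_mul]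



variable {β : Type*} {γ : Type*} [Fintype β] [DecidableEq β] [Fintype γ] [DecidableEq γ]

lemma neg_sum_mul_log_le (s : Finset β) (a : β → ℝ) (ha : ∀ b ∈ s, 0 ≤ a b) :
    -((∑ b ∈ s, a b) * Real.log (∑ b ∈ s, a b)) ≤ ∑ b ∈ s, -(a b * Real.log (a b)) := by
  have hS : 0 ≤ ∑ b ∈ s, a b := Finset.sum_nonneg ha
  have h2 : ∑ b ∈ s, -(a b * Real.log (a b)) = -(∑ b ∈ s, a b * Real.log (a b)) := by
    simp
  rw [h2]
  have : (∑ b ∈ s, a b) * Real.log (∑ b ∈ s, a b) ≥ ∑ b ∈ s, a b * Real.log (a b) := by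
    rw [Finset.sum_mul]
    apply Finset.sum_le_sum
    intro b hb
    rcases eq_or_lt_of_le (ha b hb) with h0 | h0
    · simp [← h0]
    · apply mul_le_mul_of_nonneg_left _ (ha b hb)
      exact Real.log_le_log h0 (Finset.single_le_sum ha hb)
  linarith

lemma law_comp (f : β → γ) (g : ℕ → β) (N : ℕ) (c : γ) :
    law (fun i => f (g i)) N c = ∑ b ∈ Finset.univ.filter (fun b => f b = c), law g N b := by
  unfold law
  rw [← Finset.sum_div]
  congr 1
  norm_cast
  rw [Finset.card_eq_sum_card_fiberwise (f := g)
    (t := Finset.univ.filter (fun b => f b = c))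
    (fun i hi => by simp only [Finset.mem_coe, Finset.mem_filter, Finset.mem_univ, true_and]
                    exact (Finset.mem_filter.mp (Finset.mem_coe.mp hi)).2)]
  apply Finset.sum_congr rfl
  intro b hb
  congr 1
  rw [Finset.filter_filter]
  apply Finset.filter_congr
  intro i _
  have hfb : f b = c := (Finset.mem_filter.mp hb).2
  constructor
  · rintro ⟨_, h⟩; exact h
  · intro h
    refine ⟨?_, h⟩
    show f (g i) = c
    rw [h]; exact hfb

lemma entN_comp_le (f : β → γ) (g : ℕ → β) (N : ℕ) :
    entN (law (fun i => f (g i)) N) ≤ entN (law g N) := by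
  unfold entN
  rw [← Finset.sum_fiberwise (Finset.univ) f (fun b => -(law g N b * Real.log (law g N b)))]
  apply Finset.sum_le_sum
  intro c _
  rw [law_comp]
  exact neg_sum_mul_log_le _ _ (fun b _ => law_nonneg g N b)

lemma law_pair_fst (g : ℕ → β) (h : ℕ → γ) (N : ℕ) (b : β) :
    ∑ c, law (fun i => (g i, h i)) N (b, c) = law g N b := by
  unfold law
  rw [← Finset.sum_div]
  congr 1
  norm_cast
  rw [Finset.card_eq_sum_card_fiberwise (f := h) (s := (Finset.range N).filter (fun i => g i = b))
    (t := Finset.univ) (fun i _ => Finset.mem_univ _)]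
  apply Finset.sum_congr rfl
  intro c _
  congr 1
  rw [Finset.filter_filter]
  apply Finset.filter_congr
  intro i _
  simp [Prod.ext_iff, and_comm]

lemma law_pair_snd (g : ℕ → β) (h : ℕ → γ) (N : ℕ) (c : γ) :
    ∑ b, law (fun i => (g i, h i)) N (b, c) = law h N c := by
  unfold law
  rw [← Finset.sum_div]
  congr 1
  norm_cast
  rw [Finset.card_eq_sum_card_fiberwise (f := g) (s := (Finset.range N).filter (fun i => h i = c))
    (t := Finset.univ) (fun i _ => Finset.mem_univ _)]
  apply Finset.sum_congr rfl
  intro b _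
  congr 1
  rw [Finset.filter_filter]
  apply Finset.filter_congr
  intro i _
  simp [Prod.ext_iff, and_comm]



variable {β : Type*} {γ : Type*} [Fintype β] [DecidableEq β] [Fintype γ] [DecidableEq γ]

lemma law_mono_pred (g : ℕ → β) (h : ℕ → γ) (N : ℕ) (b : β) (c : γ) :
    law (fun i => (g i, h i)) N (b, c) ≤ law g N b := by
  unfold law
  have h2 : ((((Finset.range N).filter (fun i => (fun i => (g i, h i)) i = (b, c))).card : ℝ))
      ≤ (((Finset.range N).filter (fun i => g i = b)).card : ℝ) := by
    exact Nat.cast_le.mpr (Finset.card_le_card (by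
      intro i hi
      simp only [Finset.mem_filter] at hi ⊢
      exact ⟨hi.1, congrArg Prod.fst hi.2⟩))
  exact div_le_div_of_nonneg_right h2 (Nat.cast_nonneg N)

lemma entN_pair_le (g : ℕ → β) (h : ℕ → γ) {N : ℕ} (hN : 0 < N) :
    entN (law (fun i => (g i, h i)) N) ≤ entN (law g N) + entN (law h N) := by
  set p := law (fun i => (g i, h i)) N with hpdef
  set u := law g N with hudef
  set v := law h N with hvdef
  have hple1 : ∀ bc : β × γ, p bc ≤ u bc.1 := by
    intro ⟨b, c⟩; exact law_mono_pred g h N b c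
  have hple2 : ∀ bc : β × γ, p bc ≤ v bc.2 := by
    intro ⟨b, c⟩
    have : ∀ i, ((h i, g i) : γ × β) = (c, b) ↔ ((g i, h i) : β × γ) = (b, c) := by
      intro i; constructor <;> (intro hh; simpa [Prod.ext_iff, and_comm] using hh)
    have e : p (b, c) = law (fun i => (h i, g i)) N (c, b) := by
      rw [hpdef]
      unfold law
      have hs : (Finset.range N).filter (fun i => (fun i => (g i, h i)) i = (b, c))
          = (Finset.range N).filter (fun i => (fun i => (h i, g i)) i = (c, b)) := by
        apply Finset.filter_congr
        intro i _
        show ((g i, h i) = (b, c)) ↔ ((h i, g i) = (c, b))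
        constructor <;> (intro hh; simp only [Prod.ext_iff] at hh ⊢; tauto)
      rw [hs]
    rw [e]
    exact law_mono_pred h g N c b
  have hqsum : ∑ bc : β × γ, u bc.1 * v bc.2 = 1 := by
    rw [Fintype.sum_prod_type]
    have : ∀ b, ∑ c, u b * v c = u b := by
      intro b; rw [← Finset.mul_sum, law_sum h hN, mul_one]
    simp only [this]
    exact law_sum g hN
  have h1 : entN p ≤ ∑ bc : β × γ, -(p bc * Real.log (u bc.1 * v bc.2)) := by
    apply gibbs
    · exact fun bc => law_nonneg _ _ _
    · exact fun bc => mul_nonneg (law_nonneg _ _ _) (law_nonneg _ _ _)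
    · intro bc hne
      have hp0 : 0 < p bc := lt_of_le_of_ne (law_nonneg _ _ _) (Ne.symm hne)
      exact (mul_pos (lt_of_lt_of_le hp0 (hple1 bc)) (lt_of_lt_of_le hp0 (hple2 bc))).ne'
    · exact law_sum _ hN
    · exact le_of_eq hqsum
  have h2 : ∑ bc : β × γ, -(p bc * Real.log (u bc.1 * v bc.2))
      = (∑ bc : β × γ, -(p bc * Real.log (u bc.1))) + ∑ bc : β × γ, -(p bc * Real.log (v bc.2)) := by
    rw [← Finset.sum_add_distrib]
    apply Finset.sum_congr rfl
    intro bc _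
    rcases eq_or_lt_of_le (law_nonneg (fun i => (g i, h i)) N bc) with h0 | h0
    · rw [← hpdef] at h0
      rw [← h0]; ring
    · rw [← hpdef] at h0
      have hu : u bc.1 ≠ 0 := (lt_of_lt_of_le h0 (hple1 bc)).ne'
      have hv : v bc.2 ≠ 0 := (lt_of_lt_of_le h0 (hple2 bc)).ne'
      rw [Real.log_mul hu hv]; ring
  have h3 : ∑ bc : β × γ, -(p bc * Real.log (u bc.1)) = entN u := by
    rw [Fintype.sum_prod_type]
    unfold entN
    apply Finset.sum_congr rfl
    intro b _
    have : ∑ c, -(p (b, c) * Real.log (u b)) = -((∑ c, p (b, c)) * Real.log (u b)) := by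
      rw [Finset.sum_mul (s := Finset.univ) (f := fun c => p (b,c))]
      simp
    rw [this, law_pair_fst g h N b]
  have h4 : ∑ bc : β × γ, -(p bc * Real.log (v bc.2)) = entN v := by
    rw [Fintype.sum_prod_type, Finset.sum_comm]
    unfold entN
    apply Finset.sum_congr rfl
    intro c _
    have : ∑ b, -(p (b, c) * Real.log (v c)) = -((∑ b, p (b, c)) * Real.log (v c)) := by
      rw [Finset.sum_mul (s := Finset.univ) (f := fun b => p (b,c))]
      simp
    rw [this, law_pair_snd g h N c]
  rw [h2, h3, h4] at h1
  exact h1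

lemma entN_tuple_le {N : ℕ} (hN : 0 < N) : ∀ (r : ℕ) (G : Fin r → ℕ → β),
    entN (law (fun i => fun t : Fin r => G t i) N) ≤ ∑ t, entN (law (G t) N) := by
  intro r
  induction r with
  | zero =>
    intro G
    have hz : entN (law (fun i => fun t : Fin 0 => G t i) N) = 0 := by
      unfold entN
      rw [Fintype.sum_unique]
      have h1 : law (fun i => fun t : Fin 0 => G t i) N default = 1 := by
        unfold law
        have he : (Finset.range N).filter (fun i => (fun t : Fin 0 => G t i) = default)
            = Finset.range N := by
          apply Finset.filter_true_of_mem
          intro i _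
          exact Subsingleton.elim _ _
        rw [he, Finset.card_range, div_self (by exact_mod_cast hN.ne')]
      rw [h1]; simp
    rw [hz]; simp
  | succ r ih =>
    intro G
    have key : (fun i => fun t : Fin (r+1) => G t i)
        = (fun i => (fun pr : β × (Fin r → β) => (Fin.cons pr.1 pr.2 : Fin (r+1) → β))
            ((fun i => (G 0 i, fun t : Fin r => G t.succ i)) i)) := by
      funext i
      exact (Fin.cons_self_tail (fun t : Fin (r+1) => G t i)).symm
    rw [key]
    have step1 := entN_comp_le (fun pr : β × (Fin r → β) => (Fin.cons pr.1 pr.2 : Fin (r+1) → β))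
        (fun i => (G 0 i, fun t : Fin r => G t.succ i)) N
    have step2 := entN_pair_le (g := G 0) (h := fun i => fun t : Fin r => G t.succ i) hN
    have step3 := ih (fun t => G t.succ)
    have step4 : ∑ t : Fin (r+1), entN (law (G t) N)
        = entN (law (G 0) N) + ∑ t : Fin r, entN (law (G t.succ) N) := Fin.sum_univ_succ _
    rw [step4]
    linarith



variable {β : Type*} [Fintype β] [DecidableEq β]

lemma neg_mul_log_le_two_sqrt {d : ℝ} (hd0 : 0 ≤ d) : -(d * Real.log d) ≤ 2 * Real.sqrt d := by
  rcases eq_or_lt_of_le hd0 with h | h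
  · simp [← h]
  · have hs : 0 < Real.sqrt d := Real.sqrt_pos.mpr h
    have hlogd : Real.log d = 2 * Real.log (Real.sqrt d) := by
      have h2 : Real.log ((Real.sqrt d)^2) = ((2:ℕ):ℝ) * Real.log (Real.sqrt d) := Real.log_pow (n := 2) (x := Real.sqrt d)
      rw [Real.sq_sqrt hd0] at h2
      rw [h2]; norm_num
    have hinv : -Real.log (Real.sqrt d) ≤ (Real.sqrt d)⁻¹ := by
      have := Real.log_le_sub_one_of_pos (inv_pos.mpr hs)
      rw [Real.log_inv] at this
      linarith
    have hds : d * (Real.sqrt d)⁻¹ = Real.sqrt d := by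
      rw [← div_eq_mul_inv]
      exact Real.div_sqrt
    calc -(d * Real.log d) = 2 * (d * (-Real.log (Real.sqrt d))) := by rw [hlogd]; ring
      _ ≤ 2 * (d * (Real.sqrt d)⁻¹) := by
          apply mul_le_mul_of_nonneg_left _ (by norm_num)
          exact mul_le_mul_of_nonneg_left hinv hd0
      _ = 2 * Real.sqrt d := by rw [hds]

lemma abs_negmullog_diff {a b : ℝ} (ha0 : 0 ≤ a) (hab : a ≤ b) (hb1 : b ≤ 1) :
    |(-(b * Real.log b)) - (-(a * Real.log a))| ≤ 3 * Real.sqrt (b - a) := by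
  have hd0 : 0 ≤ b - a := sub_nonneg.mpr hab
  have hs0 : 0 ≤ Real.sqrt (b - a) := Real.sqrt_nonneg _
  have hd1 : b - a ≤ 1 := by linarith
  have hdsq : b - a ≤ Real.sqrt (b - a) := by
    have h1 : Real.sqrt (b - a) ≤ 1 := by
      rw [show (1:ℝ) = Real.sqrt 1 by simp]
      exact Real.sqrt_le_sqrt hd1
    nlinarith [Real.sq_sqrt hd0]
  rcases eq_or_lt_of_le ha0 with haz | hap
  · -- a = 0
    have hbl : -(b * Real.log b) ≤ 2 * Real.sqrt b := neg_mul_log_le_two_sqrt (by linarith)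
    have hnn : 0 ≤ -(b * Real.log b) := by
      have := Real.log_nonpos (by linarith) hb1
      nlinarith
    rw [← haz]
    simp only [Real.log_zero, mul_zero, neg_zero, sub_zero]
    rw [abs_of_nonneg hnn]
    have : Real.sqrt b = Real.sqrt (b - 0) := by norm_num
    nlinarith [this ▸ hbl]
  · rcases eq_or_lt_of_le hab with hba | hlt
    · rw [← hba]; simp
    · have hb0 : 0 < b := lt_trans hap hlt
      have hd0' : 0 < b - a := sub_pos.mpr hlt
      set d := b - a with hddef
      -- T1 bounds
      have hT1u : a * (Real.log b - Real.log a) ≤ d := by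
        have hlog : Real.log (b / a) ≤ b / a - 1 := Real.log_le_sub_one_of_pos (div_pos hb0 hap)
        rw [← Real.log_div hb0.ne' hap.ne']
        calc a * Real.log (b / a) ≤ a * (b / a - 1) := mul_le_mul_of_nonneg_left hlog hap.le
          _ = b - a := by field_simp
      have hT1l : 0 ≤ a * (Real.log b - Real.log a) := by
        have := Real.log_le_log hap hab
        nlinarith
      -- T2 bounds
      have hT2u : d * Real.log b ≤ 0 := by
        have hl : Real.log b ≤ 0 := Real.log_nonpos hb0.le hb1
        nlinarith
      have hT2l : -(2 * Real.sqrt d) ≤ d * Real.log b := by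
        have hdb : d ≤ b := by linarith
        have hll : Real.log d ≤ Real.log b := Real.log_le_log hd0' hdb
        have h1 : d * Real.log d ≤ d * Real.log b := mul_le_mul_of_nonneg_left hll hd0
        have h2 : -(d * Real.log d) ≤ 2 * Real.sqrt d := neg_mul_log_le_two_sqrt hd0
        linarith
      have hident : (-(b * Real.log b)) - (-(a * Real.log a))
          = -((a * (Real.log b - Real.log a)) + d * Real.log b) := by
        rw [hddef]; ring
      rw [hident, abs_le]
      constructor
      · -- -(3√d) ≤ -(T1+T2): T1+T2 ≤ 3√d : T1 ≤ d ≤ √d, T2 ≤ 0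
        nlinarith
      · nlinarith

lemma abs_negmullog_diff' {a b : ℝ} (ha0 : 0 ≤ a) (ha1 : a ≤ 1) (hb0 : 0 ≤ b) (hb1 : b ≤ 1) :
    |(-(a * Real.log a)) - (-(b * Real.log b))| ≤ 3 * Real.sqrt |a - b| := by
  rcases le_total a b with h | h
  · have H := abs_negmullog_diff ha0 h hb1
    have e : |a - b| = b - a := by
      rw [abs_sub_comm]
      exact abs_of_nonneg (by linarith)
    rw [e, abs_sub_comm]
    exact H
  · have H := abs_negmullog_diff hb0 h ha1
    have e : |a - b| = a - b := abs_of_nonneg (by linarith)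
    rw [e]
    exact H

lemma abs_entN_diff {p q : β → ℝ} {δ : ℝ}
    (hp : ∀ b, 0 ≤ p b ∧ p b ≤ 1) (hq : ∀ b, 0 ≤ q b ∧ q b ≤ 1)
    (hd : ∀ b, |p b - q b| ≤ δ) :
    |entN p - entN q| ≤ (Fintype.card β) * (3 * Real.sqrt δ) := by
  unfold entN
  rw [← Finset.sum_sub_distrib]
  calc |∑ b, (-(p b * Real.log (p b)) - -(q b * Real.log (q b)))|
      ≤ ∑ b, |(-(p b * Real.log (p b)) - -(q b * Real.log (q b)))| :=
        Finset.abs_sum_le_sum_abs _ _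
    _ ≤ ∑ _b : β, 3 * Real.sqrt δ := by
        apply Finset.sum_le_sum
        intro b _
        have h1 := abs_negmullog_diff' (hp b).1 (hp b).2 (hq b).1 (hq b).2
        have h2 : Real.sqrt |p b - q b| ≤ Real.sqrt δ := Real.sqrt_le_sqrt (hd b)
        linarith
    _ = (Fintype.card β) * (3 * Real.sqrt δ) := by
        rw [Finset.sum_const, Finset.card_univ, nsmul_eq_mul]


variable {𝒳 : Type*} [Fintype 𝒳] [DecidableEq 𝒳]

variable {𝒳 : Type*} [Fintype 𝒳] [DecidableEq 𝒳]

def blk (x : ℕ → 𝒳) (m : ℕ) (j : ℕ) : Fin m → 𝒳 := fun r => x (m * j + (r : ℕ))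

lemma div_fiber_eq_Ico {m j i : ℕ} (hm : 0 < m) : i / m = j ↔ (m * j ≤ i ∧ i < m * j + m) := by
  constructor
  · intro h
    subst h
    have h2 := Nat.div_add_mod i m
    have h3 := Nat.mod_lt i hm
    omega
  · rintro ⟨h1, h2⟩
    obtain ⟨r, hr⟩ : ∃ r, i = m * j + r := ⟨i - m * j, by omega⟩
    have hrm : r < m := by omega
    rw [hr, Nat.mul_add_div hm, Nat.div_eq_of_lt hrm]
    omega

lemma countA (x : ℕ → 𝒳) (m t M : ℕ) (hm : 0 < m) (w : Fin m → 𝒳) :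
    ((Finset.range (m * M)).filter (fun i => blk x m (i / m + t) = w)).card
      = m * ((Finset.range M).filter (fun j => blk x m (j + t) = w)).card := by
  rw [Finset.card_eq_sum_card_fiberwise (f := fun i => i / m) (t := Finset.range M)
    (by
      intro i hi
      simp only [Finset.mem_coe, Finset.mem_filter, Finset.mem_range] at hi ⊢
      exact Nat.div_lt_of_lt_mul (by omega))]
  rw [Finset.card_filter, Finset.mul_sum]
  apply Finset.sum_congr rfl
  intro j hj
  simp only [Finset.mem_range] at hj
  rw [Finset.filter_filter]
  by_cases hw : blk x m (j + t) = w
  · rw [if_pos hw]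
    have hset : (Finset.range (m * M)).filter (fun i => blk x m (i / m + t) = w ∧ i / m = j)
        = Finset.Ico (m * j) (m * j + m) := by
      ext i
      simp only [Finset.mem_filter, Finset.mem_range, Finset.mem_Ico]
      constructor
      · rintro ⟨_, _, hdiv⟩
        exact (div_fiber_eq_Ico hm).mp hdiv
      · rintro ⟨h1, h2⟩
        have hdiv : i / m = j := (div_fiber_eq_Ico hm).mpr ⟨h1, h2⟩
        refine ⟨?_, by rw [hdiv]; exact hw, hdiv⟩
        have : m * j + m = m * (j + 1) := by ring
        have hjM : m * (j + 1) ≤ m * M := Nat.mul_le_mul_left m (by omega)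
        omega
    rw [hset, Nat.card_Ico]
    omega
  · rw [if_neg hw, mul_zero]
    convert Finset.card_empty
    apply Finset.filter_eq_empty_iff.mpr
    intro i _
    rintro ⟨hblk, hdiv⟩
    exact hw (by rw [← hdiv]; exact hblk)

lemma countB (x : ℕ → 𝒳) (m t M : ℕ) (w : Fin m → 𝒳) :
    ((Finset.range M).filter (fun j => blk x m (j + t) = w)).card
      = ((Finset.Ico t (t + M)).filter (fun j => blk x m j = w)).card := by
  apply Finset.card_bij (fun j _ => j + t)
  · intro j hj
    simp only [Finset.mem_filter, Finset.mem_range] at hj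
    simp only [Finset.mem_filter, Finset.mem_Ico]
    exact ⟨⟨by omega, by omega⟩, hj.2⟩
  · intro a ha b hb hab
    omega
  · intro a ha
    simp only [Finset.mem_filter, Finset.mem_Ico] at ha
    refine ⟨a - t, ?_, by omega⟩
    simp only [Finset.mem_filter, Finset.mem_range]
    constructor
    · omega
    · have : a - t + t = a := by omega
      rw [this]
      exact ha.2

lemma countC1 (Q : ℕ → Prop) [DecidablePred Q] (t M D : ℕ) :
    ((Finset.Ico t (t + M)).filter (fun j => Q j)).card
      ≤ ((Finset.range D).filter (fun j => Q j)).card + ((t + M) - D) := by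
  have hsub : (Finset.Ico t (t + M)).filter (fun j => Q j)
      ⊆ ((Finset.range D).filter (fun j => Q j)) ∪ Finset.Ico D (t + M) := by
    intro j hj
    simp only [Finset.mem_filter, Finset.mem_Ico, Finset.mem_union, Finset.mem_range] at hj ⊢
    rcases Nat.lt_or_ge j D with h | h
    · exact Or.inl ⟨h, hj.2⟩
    · exact Or.inr ⟨h, hj.1.2⟩
  calc ((Finset.Ico t (t + M)).filter (fun j => Q j)).card
      ≤ (((Finset.range D).filter (fun j => Q j)) ∪ Finset.Ico D (t + M)).card :=
        Finset.card_le_card hsub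
    _ ≤ ((Finset.range D).filter (fun j => Q j)).card + (Finset.Ico D (t + M)).card :=
        Finset.card_union_le _ _
    _ = ((Finset.range D).filter (fun j => Q j)).card + ((t + M) - D) := by rw [Nat.card_Ico]

lemma countC2 (Q : ℕ → Prop) [DecidablePred Q] (t M D : ℕ) :
    ((Finset.range D).filter (fun j => Q j)).card
      ≤ ((Finset.Ico t (t + M)).filter (fun j => Q j)).card + t + (D - (t + M)) := by
  have hsub : (Finset.range D).filter (fun j => Q j)
      ⊆ ((Finset.Ico t (t + M)).filter (fun j => Q j)) ∪ (Finset.range t ∪ Finset.Ico (t + M) D) := by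
    intro j hj
    simp only [Finset.mem_filter, Finset.mem_Ico, Finset.mem_union, Finset.mem_range] at hj ⊢
    rcases Nat.lt_or_ge j t with h | h
    · exact Or.inr (Or.inl h)
    · rcases Nat.lt_or_ge j (t + M) with h2 | h2
      · exact Or.inl ⟨⟨h, h2⟩, hj.2⟩
      · exact Or.inr (Or.inr ⟨h2, hj.1⟩)
  calc ((Finset.range D).filter (fun j => Q j)).card
      ≤ _ := Finset.card_le_card hsub
    _ ≤ ((Finset.Ico t (t + M)).filter (fun j => Q j)).card
        + (Finset.range t ∪ Finset.Ico (t + M) D).card := Finset.card_union_le _ _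
    _ ≤ ((Finset.Ico t (t + M)).filter (fun j => Q j)).card
        + ((Finset.range t).card + (Finset.Ico (t + M) D).card) := by
          have := Finset.card_union_le (Finset.range t) (Finset.Ico (t + M) D)
          omega
    _ = _ := by rw [Finset.card_range, Nat.card_Ico]; omega



variable {β : Type*} [Fintype β] [DecidableEq β]
variable {𝒳 : Type*} [Fintype 𝒳] [DecidableEq 𝒳]

lemma law_close (x : ℕ → 𝒳) (m k R t n : ℕ) (hm : 0 < m) (ht : t ≤ R + 1)
    (hk1 : k ≤ (R + 1) * m) (hk0 : 1 ≤ k) (hkn : k ≤ n) (hmn : m ≤ n) (w : Fin m → 𝒳) :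
    |law (fun i => blk x m (i / m + t)) (n - k + 1) w - law (fun j => blk x m j) (n / m) w|
      ≤ ((4 * R + 9) * m : ℝ) / (n - k + 1 : ℕ) := by
  set N := n - k + 1 with hN
  set D := n / m with hD
  set J := N / m with hJ
  have hN0 : 0 < N := by omega
  have hNk : N + k = n + 1 := by omega
  -- division facts
  have hJ1 : m * J ≤ N ∧ N < m * J + m := by
    have h2 := Nat.div_add_mod N m
    have h3 := Nat.mod_lt N hm
    rw [← hJ] at h2
    omega
  have hDa : m * D ≤ n ∧ n < m * D + m := by
    have h2 := Nat.div_add_mod n m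
    have h3 := Nat.mod_lt n hm
    rw [← hD] at h2
    omega
  have hJD : J ≤ D := by
    have h1 : N ≤ n := by omega
    have := Nat.div_le_div_right (c := m) h1
    rw [← hJ, ← hD] at this
    exact this
  have hD1 : 1 ≤ D := by
    have := (Nat.one_le_div_iff hm).mpr hmn
    rw [← hD] at this
    exact this
  have hDJ : D ≤ J + R + 2 := by
    have e : m * J + m + (R + 1) * m = m * (J + R + 2) := by ring
    have h1 : m * D < m * (J + R + 2) := by omega
    have := Nat.lt_of_mul_lt_mul_left h1
    omega
  -- counts
  set cnt := ((Finset.range N).filter (fun i => blk x m (i / m + t) = w)).card with hcnt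
  set cs : ℕ → ℕ := fun M => ((Finset.range M).filter (fun j => blk x m (j + t) = w)).card with hcs
  set cB := ((Finset.range D).filter (fun j => blk x m j = w)).card with hcB
  have cntlow : m * cs J ≤ cnt := by
    rw [← countA x m t J hm w]
    exact Finset.card_le_card (Finset.filter_subset_filter _
      (Finset.range_subset_range.mpr hJ1.1))
  have cnthigh : cnt ≤ m * cs (J + 1) := by
    rw [← countA x m t (J + 1) hm w]
    refine Finset.card_le_card (Finset.filter_subset_filter _
      (Finset.range_subset_range.mpr ?_))
    have e2 : m * (J + 1) = m * J + m := by ring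
    omega
  have cssucc : cs (J + 1) ≤ cs J + 1 := by
    rw [hcs]
    simp only []
    rw [Finset.range_add_one, Finset.filter_insert]
    split_ifs
    · exact Finset.card_insert_le _ _
    · omega
  have hup : cs J ≤ cB + (R + 1) := by
    have h1 := countB x m t J w
    have h2 := countC1 (fun j => blk x m j = w) t J D
    have h3 : (t + J) - D ≤ t := by omega
    rw [hcs]
    simp only []
    omega
  have hdn : cB ≤ cs J + (2 * R + 3) := by
    have h1 := countB x m t J w
    have h2 := countC2 (fun j => blk x m j = w) t J D
    have h3 : D - (t + J) ≤ R + 2 := by omega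
    rw [hcs]
    simp only []
    omega
  have hcBD : cB ≤ D := by
    calc cB ≤ (Finset.range D).card := Finset.card_le_card (Finset.filter_subset _ _)
      _ = D := Finset.card_range D
  have hcsJ : cs J ≤ J := by
    calc cs J ≤ (Finset.range J).card := Finset.card_le_card (Finset.filter_subset _ _)
      _ = J := Finset.card_range J
  -- move to ℝ
  have hNr : (0:ℝ) < (N:ℝ) := by exact_mod_cast hN0
  have hDr : (0:ℝ) < (D:ℝ) := by exact_mod_cast hD1
  have hmr : (0:ℝ) < (m:ℝ) := by exact_mod_cast hm
  have law1 : law (fun i => blk x m (i / m + t)) N w = (cnt:ℝ) / N := rfl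
  have law2 : law (fun j => blk x m j) D w = (cB:ℝ) / D := rfl
  rw [law1, law2]
  -- real versions of count inequalities
  have rc1 : (cnt:ℝ) ≤ m * cs J + m := by
    have h4 : m * cs (J+1) ≤ m * (cs J + 1) := Nat.mul_le_mul_left m cssucc
    have e3 : m * (cs J + 1) = m * cs J + m := by ring
    have : cnt ≤ m * cs J + m := by omega
    exact_mod_cast this
  have rc2 : (m:ℝ) * cs J ≤ cnt := by exact_mod_cast cntlow
  have rc3 : (cs J : ℝ) ≤ cB + (R + 1) := by exact_mod_cast hup
  have rc4 : (cB:ℝ) ≤ cs J + (2 * R + 3) := by exact_mod_cast hdn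
  have rc5 : (m:ℝ) * D ≤ N + k := by
    have : m * D ≤ N + k := by omega
    exact_mod_cast this
  have rc6 : (N:ℝ) ≤ m * D + m := by
    have : N ≤ m * D + m := by omega
    exact_mod_cast this
  have rc7 : (cB:ℝ) ≤ D := by exact_mod_cast hcBD
  have rc8 : (k:ℝ) ≤ (R + 1) * m := by exact_mod_cast hk1
  have rc9 : (cs J : ℝ) ≤ D := by exact_mod_cast (hcsJ.trans hJD)
  have rc10 : (1:ℝ) ≤ D := by exact_mod_cast hD1
  have hcB0 : (0:ℝ) ≤ cB := Nat.cast_nonneg _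
  have hcnt0 : (0:ℝ) ≤ cnt := Nat.cast_nonneg _
  have hcs0 : (0:ℝ) ≤ cs J := Nat.cast_nonneg _
  have hk0' : (0:ℝ) ≤ k := Nat.cast_nonneg _
  have hR0 : (0:ℝ) ≤ R := Nat.cast_nonneg _
  -- key bilinear bounds
  have key_up : (cnt:ℝ) * D ≤ cB * N + (4 * R + 9) * m * D := by
    nlinarith [mul_le_mul_of_nonneg_right rc1 hDr.le,
      mul_le_mul_of_nonneg_right rc3 (mul_nonneg hmr.le hDr.le),
      mul_le_mul_of_nonneg_left rc5 hcB0,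
      mul_le_mul (le_refl (D:ℝ)) rc8 hk0' hDr.le,
      mul_le_mul_of_nonneg_left rc8 hcB0,
      mul_nonneg hmr.le hDr.le, mul_le_mul_of_nonneg_right rc7 hk0']
  have key_dn : (cB:ℝ) * N ≤ cnt * D + (4 * R + 9) * m * D := by
    nlinarith [mul_le_mul_of_nonneg_right rc4 hNr.le,
      mul_le_mul_of_nonneg_left rc6 hcs0,
      mul_le_mul_of_nonneg_right rc2 hDr.le,
      mul_le_mul_of_nonneg_left rc9 hmr.le,
      mul_le_mul_of_nonneg_right rc6 (by positivity : (0:ℝ) ≤ 2*R+3),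
      mul_le_mul_of_nonneg_left (mul_le_mul_of_nonneg_left rc10 hmr.le)
        (by positivity : (0:ℝ) ≤ 2*R+3),
      mul_nonneg hmr.le hDr.le]
  -- conclude
  have e1 : (cnt:ℝ) / N - cB / D = (cnt * D - cB * N) / (N * D) := by
    field_simp
  have e2 : ((4 * R + 9) * m : ℝ) / N = ((4 * R + 9) * m * D) / (N * D) := by
    rw [mul_div_mul_right _ _ hDr.ne']
  rw [e1, e2, abs_div, abs_of_pos (mul_pos hNr hDr)]
  apply div_le_div_of_nonneg_right _ (mul_pos hNr hDr).le
  rw [abs_le]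
  constructor <;> linarith



lemma bddAb {f : ℕ → ℝ} {B : ℝ} (h : ∀ n, f n ≤ B) :
    IsBoundedUnder (· ≤ ·) atTop f := isBoundedUnder_of ⟨B, h⟩

lemma bddBe {f : ℕ → ℝ} {a : ℝ} (h : ∀ n, a ≤ f n) :
    IsBoundedUnder (· ≥ ·) atTop f := isBoundedUnder_of ⟨a, h⟩

lemma cobddGe {f : ℕ → ℝ} {B : ℝ} (h : ∀ n, f n ≤ B) :
    IsCoboundedUnder (· ≥ ·) atTop f := (bddAb h).isCoboundedUnder_flip

lemma cobddLe {f : ℕ → ℝ} {a : ℝ} (h : ∀ n, a ≤ f n) :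
    IsCoboundedUnder (· ≤ ·) atTop f := (bddBe h).isCoboundedUnder_flip

lemma liminf_le_liminf_add_const {f g : ℕ → ℝ} {c B : ℝ}
    (hfg : ∀ᶠ n in atTop, f n ≤ g n + c)
    (hf0 : ∀ n, 0 ≤ f n) (hg0 : ∀ n, 0 ≤ g n) (hgB : ∀ n, g n ≤ B) :
    liminf f atTop ≤ liminf g atTop + c := by
  have h1 : liminf f atTop ≤ liminf (fun n => g n + c) atTop :=
    liminf_le_liminf hfg (bddBe hf0) (cobddGe (f := fun n => g n + c) (B := B + c) (fun n => by show g n + c ≤ B + c; linarith [hgB n]))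
  have h2 : liminf (fun n => g n + c) atTop ≤ liminf g atTop + c := by
    by_contra hcon
    push_neg at hcon
    obtain ⟨d, hd1, hd2⟩ := exists_between hcon
    have h3 : liminf g atTop < d - c := by linarith
    have h4 := frequently_lt_of_liminf_lt (cobddGe hgB) h3
    have h5 : ∃ᶠ n in atTop, g n + c ≤ d := h4.mono (fun n hn => by linarith)
    have h6 := liminf_le_of_frequently_le h5
      (bddBe (f := fun n => g n + c) (a := c) (fun n => by show c ≤ g n + c; linarith [hg0 n]))
    linarith
  linarith

lemma limsup_le_limsup_add_const {f g : ℕ → ℝ} {c B : ℝ}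
    (hfg : ∀ᶠ n in atTop, f n ≤ g n + c)
    (hf0 : ∀ n, 0 ≤ f n) (hg0 : ∀ n, 0 ≤ g n) (hgB : ∀ n, g n ≤ B) :
    limsup f atTop ≤ limsup g atTop + c := by
  have h1 : limsup f atTop ≤ limsup (fun n => g n + c) atTop :=
    limsup_le_limsup hfg (cobddLe hf0) (bddAb (f := fun n => g n + c) (B := B + c) (fun n => by show g n + c ≤ B + c; linarith [hgB n]))
  have h2 : limsup (fun n => g n + c) atTop ≤ limsup g atTop + c := by
    by_contra hcon
    push_neg at hcon
    obtain ⟨d, hd1, hd2⟩ := exists_between hcon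
    have h3 : limsup g atTop < d - c := by linarith
    have h4 := eventually_lt_of_limsup_lt h3 (bddAb hgB)
    have h5 : ∀ᶠ n in atTop, g n + c ≤ d := h4.mono (fun n hn => by linarith)
    have h6 := limsup_le_of_le (cobddLe (f := fun n => g n + c) (a := c)
      (fun n => by show c ≤ g n + c; linarith [hg0 n])) h5
    linarith
  linarith

lemma liminf_comp_div_le {g : ℕ → ℝ} {R : ℕ} {B : ℝ} (hR : 0 < R)
    (hg0 : ∀ n, 0 ≤ g n) (hgB : ∀ n, g n ≤ B) :
    liminf (fun k => g (k / R)) atTop ≤ liminf g atTop := by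
  by_contra hcon
  push_neg at hcon
  obtain ⟨d, hd1, hd2⟩ := exists_between hcon
  have freq : ∃ᶠ m in atTop, g m < d := frequently_lt_of_liminf_lt (cobddGe hgB) hd1
  have freq2 : ∃ᶠ k in atTop, g (k / R) < d := by
    rw [frequently_atTop] at freq ⊢
    intro a
    obtain ⟨m, hm, hmd⟩ := freq a
    refine ⟨R * m, le_trans hm (Nat.le_mul_of_pos_left m hR), ?_⟩
    rw [Nat.mul_div_cancel_left m hR]
    exact hmd
  have h6 := liminf_le_of_frequently_le (freq2.mono fun k h => le_of_lt h)
    (bddBe (f := fun k => g (k / R)) (a := 0) (fun k => hg0 _))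
  linarith

lemma tendsto_div_nat_atTop {R : ℕ} (hR : 0 < R) :
    Tendsto (fun k : ℕ => k / R) atTop atTop := by
  apply tendsto_atTop_atTop.mpr
  intro b
  refine ⟨R * b, fun a ha => ?_⟩
  have := Nat.div_le_div_right (c := R) ha
  rwa [Nat.mul_div_cancel_left b hR] at this

lemma limsup_comp_div_le {g : ℕ → ℝ} {R : ℕ} {B : ℝ} (hR : 0 < R)
    (hg0 : ∀ n, 0 ≤ g n) (hgB : ∀ n, g n ≤ B) :
    limsup (fun k => g (k / R)) atTop ≤ limsup g atTop := by
  by_contra hcon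
  push_neg at hcon
  obtain ⟨d, hd1, hd2⟩ := exists_between hcon
  have ev : ∀ᶠ m in atTop, g m < d := eventually_lt_of_limsup_lt hd1 (bddAb hgB)
  have ev2 : ∀ᶠ k in atTop, g (k / R) < d := (tendsto_div_nat_atTop hR).eventually ev
  have h6 := limsup_le_of_le (cobddLe (f := fun k => g (k / R)) (a := 0) (fun k => hg0 _))
    (ev2.mono fun k h => le_of_lt h)
  linarith

lemma liminf_nonneg {f : ℕ → ℝ} {B : ℝ} (hf0 : ∀ n, 0 ≤ f n) (hfB : ∀ n, f n ≤ B) :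
    0 ≤ liminf f atTop :=
  le_liminf_of_le (cobddGe hfB) (Eventually.of_forall hf0)

lemma liminf_le_bound {f : ℕ → ℝ} {B : ℝ} (hf0 : ∀ n, 0 ≤ f n) (hfB : ∀ n, f n ≤ B) :
    liminf f atTop ≤ B :=
  liminf_le_of_frequently_le (Frequently.of_forall hfB) (bddBe hf0)

lemma limsup_nonneg {f : ℕ → ℝ} {B : ℝ} (hf0 : ∀ n, 0 ≤ f n) (hfB : ∀ n, f n ≤ B) :
    0 ≤ limsup f atTop :=
  le_limsup_of_frequently_le (Frequently.of_forall hf0) (bddAb hfB)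

lemma limsup_le_bound {f : ℕ → ℝ} {B : ℝ} (hf0 : ∀ n, 0 ≤ f n) (hfB : ∀ n, f n ≤ B) :
    limsup f atTop ≤ B :=
  limsup_le_of_le (cobddLe hf0) (Eventually.of_forall hfB)


lemma entN_nonneg' {q : β → ℝ} (h : ∀ b, 0 ≤ q b ∧ q b ≤ 1) : 0 ≤ entN q := by
  apply Finset.sum_nonneg
  intro b _
  have h1 := (h b).1
  have h2 : Real.log (q b) ≤ 0 := Real.log_nonpos h1 (h b).2
  nlinarith

lemma ent2_eq_entN (q : β → ℝ) : ent2 q = entN q / Real.log 2 := by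
  unfold ent2 entN
  rw [Finset.sum_div]
  apply Finset.sum_congr rfl
  intro b _
  rw [Real.logb]
  ring

lemma hsw_eq (x : ℕ → 𝒳) (k n : ℕ) :
    Hsw x k n = entN (law (fun i => fun j : Fin k => x (i + (j : ℕ))) (n - k + 1)) / Real.log 2 := by
  unfold Hsw
  rw [ent2_eq_entN]
  rfl

lemma hblock_eq (x : ℕ → 𝒳) (m n : ℕ) :
    Hblock x m n = entN (law (fun i => fun j : Fin m => x (m * i + (j : ℕ))) (n / m)) / Real.log 2 := by
  unfold Hblock
  rw [ent2_eq_entN]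
  rfl

lemma law01 (g : ℕ → β) (N : ℕ) : ∀ b, 0 ≤ law g N b ∧ law g N b ≤ 1 :=
  fun b => ⟨law_nonneg g N b, law_le_one g N b⟩

lemma log2pos : (0:ℝ) < Real.log 2 := Real.log_pos one_lt_two

lemma hsw_nonneg (x : ℕ → 𝒳) (k n : ℕ) : 0 ≤ Hsw x k n := by
  rw [hsw_eq]
  exact div_nonneg (entN_nonneg' (law01 _ _)) log2pos.le

lemma hblock_nonneg (x : ℕ → 𝒳) (m n : ℕ) : 0 ≤ Hblock x m n := by
  rw [hblock_eq]
  exact div_nonneg (entN_nonneg' (law01 _ _)) log2pos.le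

lemma entN_law_le {k : ℕ} (g : ℕ → (Fin k → 𝒳)) {N : ℕ} (hN : 0 < N) :
    entN (law g N) ≤ (k : ℝ) * Real.log (Fintype.card 𝒳) := by
  have h1 := entN_le_log_card (law g N) (law_nonneg _ _) (law_sum _ hN)
  rw [Fintype.card_fun, Fintype.card_fin] at h1
  push_cast at h1
  rwa [Real.log_pow] at h1

lemma law_zero (g : ℕ → β) (b : β) : law g 0 b = 0 := by
  simp [law]

lemma hsw_le (x : ℕ → 𝒳) (k n : ℕ) :
    Hsw x k n ≤ (k : ℝ) * Real.logb 2 (Fintype.card 𝒳) := by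
  rw [hsw_eq]
  have h1 : entN (law (fun i => fun j : Fin k => x (i + (j : ℕ))) (n - k + 1))
      ≤ (k : ℝ) * Real.log (Fintype.card 𝒳) := entN_law_le _ (by omega)
  rw [Real.logb, ← mul_div_assoc]
  exact div_le_div_of_nonneg_right h1 log2pos.le

lemma hblock_le (x : ℕ → 𝒳) (m n : ℕ) (hc : 1 ≤ Fintype.card 𝒳) :
    Hblock x m n ≤ (m : ℝ) * Real.logb 2 (Fintype.card 𝒳) := by
  rw [hblock_eq]
  rcases Nat.eq_zero_or_pos (n / m) with h | h
  · rw [h]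
    have hz : entN (law (fun i => fun j : Fin m => x (m * i + (j : ℕ))) 0) = 0 := by
      unfold entN
      apply Finset.sum_eq_zero
      intro b _
      rw [law_zero]
      simp
    rw [hz, zero_div]
    have hlb : (0:ℝ) ≤ Real.logb 2 (Fintype.card 𝒳) :=
      Real.logb_nonneg one_lt_two (by exact_mod_cast hc)
    exact mul_nonneg (Nat.cast_nonneg m) hlb
  · have h1 : entN (law (fun i => fun j : Fin m => x (m * i + (j : ℕ))) (n / m))
        ≤ (m : ℝ) * Real.log (Fintype.card 𝒳) := entN_law_le _ h
    rw [Real.logb, ← mul_div_assoc]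
    exact div_le_div_of_nonneg_right h1 log2pos.le

/-- The key per-`k` eventual inequality. -/
lemma perk (x : ℕ → 𝒳) (R k : ℕ) (hR : 1 ≤ R) (hk : R * R ≤ k) {ε : ℝ} (hε : 0 < ε) :
    ∀ᶠ n in atTop, (1 / (k : ℝ)) * Hsw x k n ≤ (1 / ((k / R : ℕ) : ℝ)) * Hblock x (k / R) n
      + Real.logb 2 k / k + (2 / (R : ℝ)) * Real.logb 2 (Fintype.card 𝒳) + ε := by
  have hR0 : 0 < R := hR
  set m := k / R with hm
  have h11 : 1 * 1 ≤ R * R := Nat.mul_le_mul hR hR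
  have hk1 : 1 ≤ k := by omega
  have hmR : R ≤ m := by
    rw [hm]
    exact (Nat.le_div_iff_mul_le hR0).mpr hk
  have hm0 : 0 < m := lt_of_lt_of_le hR0 hmR
  have hdm := Nat.div_add_mod k R
  rw [← hm] at hdm
  have hmod : k % R < R := Nat.mod_lt k hR0
  have hRm : R * m ≤ k := by omega
  have hkRm : k ≤ (R + 1) * m := by
    have e : (R + 1) * m = R * m + m := by ring
    omega
  have hmk : m ≤ k := by rw [hm]; exact Nat.div_le_self k R
  set C2 : ℝ := ((R:ℝ) + 2) * (Fintype.card (Fin m → 𝒳)) * 3 / (Real.log 2 * k) with hC2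
  have t1 : Tendsto (fun n : ℕ => ((n - k + 1 : ℕ) : ℝ)) atTop atTop :=
    tendsto_natCast_atTop_atTop.comp
      (tendsto_atTop_atTop.mpr fun b => ⟨b + k, fun a ha => by omega⟩)
  have t2 : Tendsto (fun n : ℕ => ((4 * R + 9) * m : ℝ) / ((n - k + 1 : ℕ) : ℝ))
      atTop (nhds 0) := Tendsto.div_atTop tendsto_const_nhds t1
  have t3 : Tendsto (fun n : ℕ => Real.sqrt (((4 * R + 9) * m : ℝ) / ((n - k + 1 : ℕ) : ℝ)))
      atTop (nhds 0) := by
    have h := (Real.continuous_sqrt.tendsto 0).comp t2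
    simpa [Function.comp_def] using h
  have t4 : Tendsto (fun n : ℕ =>
      C2 * Real.sqrt (((4 * R + 9) * m : ℝ) / ((n - k + 1 : ℕ) : ℝ))) atTop (nhds 0) := by
    have h := t3.const_mul C2
    simpa using h
  have ev1 : ∀ᶠ n in atTop,
      C2 * Real.sqrt (((4 * R + 9) * m : ℝ) / ((n - k + 1 : ℕ) : ℝ)) < ε :=
    Tendsto.eventually_lt_const hε t4
  filter_upwards [ev1, eventually_ge_atTop (k + m)] with n hEn hn
  have hkn : k ≤ n := by omega
  have hmn : m ≤ n := by omega
  have hN0 : 0 < n - k + 1 := by omega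
  have hD0 : 0 < n / m := (Nat.one_le_div_iff hm0).mpr hmn
  set Gt : Fin (R + 2) → ℕ → (Fin m → 𝒳) := fun t i => blk x m (i / m + (t : ℕ)) with hGt
  set φ : ℕ → Fin m := fun i => ⟨i % m, Nat.mod_lt i hm0⟩ with hφ
  set F : Fin m × (Fin (R + 2) → (Fin m → 𝒳)) → (Fin k → 𝒳) := fun p =>
    (fun j : Fin k => p.2 ⟨((p.1 : ℕ) + (j : ℕ)) / m, by
      have h1 : (p.1 : ℕ) < m := p.1.isLt
      have h2 : (j : ℕ) < k := j.isLt
      rw [Nat.div_lt_iff_lt_mul hm0]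
      have e : (R + 2) * m = (R + 1) * m + m := by ring
      omega⟩ ⟨((p.1 : ℕ) + (j : ℕ)) % m, Nat.mod_lt _ hm0⟩) with hF
  have hFu : (fun i => F (φ i, fun t => Gt t i))
      = (fun i => fun j : Fin k => x (i + (j : ℕ))) := by
    funext i
    funext j
    show blk x m (i / m + (i % m + (j : ℕ)) / m) ⟨(i % m + (j : ℕ)) % m, _⟩ = x (i + (j : ℕ))
    show x (m * (i / m + (i % m + (j : ℕ)) / m) + (i % m + (j : ℕ)) % m) = x (i + (j : ℕ))
    congr 1
    have e1 := Nat.div_add_mod i m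
    have e2 := Nat.div_add_mod (i % m + (j : ℕ)) m
    have e3 : m * (i / m + (i % m + (j : ℕ)) / m)
        = m * (i / m) + m * ((i % m + (j : ℕ)) / m) := by ring
    omega
  have c1 : entN (law (fun i => fun j : Fin k => x (i + (j : ℕ))) (n - k + 1))
      ≤ entN (law (fun i => (φ i, fun t => Gt t i)) (n - k + 1)) := by
    rw [← hFu]
    exact entN_comp_le F (fun i => (φ i, fun t => Gt t i)) (n - k + 1)
  have c2 : entN (law (fun i => (φ i, fun t => Gt t i)) (n - k + 1))
      ≤ entN (law φ (n - k + 1))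
        + entN (law (fun i => fun t : Fin (R + 2) => Gt t i) (n - k + 1)) :=
    entN_pair_le _ _ hN0
  have c3 : entN (law φ (n - k + 1)) ≤ Real.log m := by
    have h := entN_le_log_card (law φ (n - k + 1)) (law_nonneg _ _) (law_sum _ hN0)
    rwa [Fintype.card_fin] at h
  have c4 : entN (law (fun i => fun t : Fin (R + 2) => Gt t i) (n - k + 1))
      ≤ ∑ t : Fin (R + 2), entN (law (Gt t) (n - k + 1)) := entN_tuple_le hN0 (R + 2) Gt
  set Bq : ℝ := entN (law (fun i => fun j : Fin m => x (m * i + (j : ℕ))) (n / m)) with hBq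
  set CE : ℝ := (Fintype.card (Fin m → 𝒳) : ℝ)
      * (3 * Real.sqrt (((4 * R + 9) * m : ℝ) / ((n - k + 1 : ℕ) : ℝ))) with hCE
  have c5 : ∀ t : Fin (R + 2), entN (law (Gt t) (n - k + 1)) ≤ Bq + CE := by
    intro t
    have hclose := fun w => law_close x m k R (t : ℕ) n hm0
      (by have := t.isLt; omega) hkRm hk1 hkn hmn w
    have hdiff := abs_entN_diff (p := law (Gt t) (n - k + 1))
      (q := law (fun j => blk x m j) (n / m))
      (law01 _ _) (law01 _ _) hclose
    have hble : entN (law (fun j => blk x m j) (n / m)) = Bq := rfl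
    have h3 : entN (law (Gt t) (n - k + 1)) - entN (law (fun j => blk x m j) (n / m))
        ≤ (Fintype.card (Fin m → 𝒳) : ℝ)
          * (3 * Real.sqrt (((4 * R + 9) * m : ℝ) / ((n - k + 1 : ℕ) : ℝ))) := by
      refine le_trans (le_abs_self _) (le_trans hdiff ?_)
      apply le_of_eq
      congr 1
    rw [hble] at h3
    rw [hCE]
    linarith
  have csum : ∑ t : Fin (R + 2), entN (law (Gt t) (n - k + 1)) ≤ ((R : ℝ) + 2) * (Bq + CE) := by
    have hc5 : ∀ t : Fin (R + 2), entN (law (Gt t) (n - k + 1)) ≤ Bq + CE := c5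
    calc ∑ t : Fin (R + 2), entN (law (Gt t) (n - k + 1))
        ≤ ∑ _t : Fin (R + 2), (Bq + CE) := Finset.sum_le_sum (fun t _ => hc5 t)
      _ = ((R : ℝ) + 2) * (Bq + CE) := by
          rw [Finset.sum_const, Finset.card_univ, Fintype.card_fin, nsmul_eq_mul]
          push_cast
          ring
  have main : entN (law (fun i => fun j : Fin k => x (i + (j : ℕ))) (n - k + 1))
      ≤ Real.log m + ((R : ℝ) + 2) * Bq + ((R : ℝ) + 2) * CE := by
    have h12 := c1.trans c2
    have h34 := c4.trans csum
    linarith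
  -- translate to the goal
  have hBq0 : 0 ≤ Bq := entN_nonneg' (law01 _ _)
  have hBqle : Bq ≤ (m : ℝ) * Real.log (Fintype.card 𝒳) := entN_law_le _ hD0
  have hCE0 : 0 ≤ CE := by rw [hCE]; positivity
  have hl2 := log2pos
  have hkr : (0:ℝ) < (k : ℝ) := by exact_mod_cast hk1
  have hmr : (0:ℝ) < (m : ℝ) := by exact_mod_cast hm0
  have hRr : (1:ℝ) ≤ (R : ℝ) := by exact_mod_cast hR
  have hRmr : (R : ℝ) * m ≤ k := by exact_mod_cast hRm
  have hlogc : (0:ℝ) ≤ Real.log (Fintype.card 𝒳) := by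
    have hne : Nonempty 𝒳 := ⟨x 0⟩
    have : (1:ℝ) ≤ (Fintype.card 𝒳 : ℝ) := by exact_mod_cast Fintype.card_pos
    exact Real.log_nonneg this
  rw [hsw_eq, hblock_eq]
  set S : ℝ := entN (law (fun i => fun j : Fin k => x (i + (j : ℕ))) (n - k + 1)) with hS
  set L : ℝ := Real.log 2 with hL
  have hA : (1 / (k : ℝ)) * (S / L) = S / ((k : ℝ) * L) := by ring
  have hB : S / ((k : ℝ) * L) ≤ Real.log m / ((k : ℝ) * L)
      + ((R : ℝ) + 2) * Bq / ((k : ℝ) * L) + ((R : ℝ) + 2) * CE / ((k : ℝ) * L) := by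
    rw [← add_div, ← add_div]
    exact div_le_div_of_nonneg_right main (by positivity)
  have hC : Real.log m / ((k : ℝ) * L) ≤ Real.logb 2 k / k := by
    have h1 : Real.log m ≤ Real.log k := Real.log_le_log hmr (by exact_mod_cast hmk)
    have h2 : Real.log m / ((k : ℝ) * L) ≤ Real.log k / ((k : ℝ) * L) :=
      div_le_div_of_nonneg_right h1 (by positivity)
    refine h2.trans (le_of_eq ?_)
    rw [Real.logb, div_div, mul_comm]
  have hD : ((R : ℝ) + 2) * Bq / ((k : ℝ) * L)
      ≤ (1 / (m : ℝ)) * (Bq / L) + (2 / (R : ℝ)) * Real.logb 2 (Fintype.card 𝒳) := by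
    have hd1 : ((R : ℝ) + 2) * Bq / ((k : ℝ) * L) ≤ ((R : ℝ) + 2) * Bq / (((R : ℝ) * m) * L) := by
      have hden : ((R : ℝ) * m) * L ≤ (k : ℝ) * L := by nlinarith
      gcongr
    have hd2 : ((R : ℝ) + 2) * Bq / (((R : ℝ) * m) * L)
        = Bq / ((m : ℝ) * L) + 2 * Bq / (((R : ℝ) * m) * L) := by
      field_simp
    have hd3 : 2 * Bq / (((R : ℝ) * m) * L)
        ≤ 2 * ((m : ℝ) * Real.log (Fintype.card 𝒳)) / (((R : ℝ) * m) * L) := by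
      gcongr
    have hd4 : 2 * ((m : ℝ) * Real.log (Fintype.card 𝒳)) / (((R : ℝ) * m) * L)
        = (2 / (R : ℝ)) * (Real.log (Fintype.card 𝒳) / L) := by
      field_simp
    have hd5 : Bq / ((m : ℝ) * L) = (1 / (m : ℝ)) * (Bq / L) := by ring
    have hd6 : Real.logb 2 (Fintype.card 𝒳) = Real.log (Fintype.card 𝒳) / L := by
      rw [Real.logb]
    rw [hd6]
    linarith [hd1, hd2.le, hd3, hd4.le]
  have hE : ((R : ℝ) + 2) * CE / ((k : ℝ) * L) < ε := by
    have heq : ((R : ℝ) + 2) * CE / ((k : ℝ) * L)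
        = C2 * Real.sqrt (((4 * R + 9) * m : ℝ) / ((n - k + 1 : ℕ) : ℝ)) := by
      rw [hCE, hC2, hL]
      ring
    rw [heq]
    exact hEn
  calc (1 / (k : ℝ)) * (S / L) = S / ((k : ℝ) * L) := hA
    _ ≤ _ := hB
    _ ≤ (1 / (m : ℝ)) * (Bq / L) + Real.logb 2 k / k
        + (2 / (R : ℝ)) * Real.logb 2 (Fintype.card 𝒳) + ε := by linarith [hC, hD, hE]
    _ = (1 / ((k / R : ℕ) : ℝ)) * (Bq / L) + Real.logb 2 ↑k / ↑k
        + 2 / ↑R * Real.logb 2 ↑(Fintype.card 𝒳) + ε := by rw [← hm]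

end SLB
/-- The paper's Lemma 6 (Appendix A): the best-case and worst-case sliding-window
compressibilities are upper-bounded by the corresponding block-by-block quantities. -/
theorem sliding_le_block {𝒳 : Type*} [Fintype 𝒳] [DecidableEq 𝒳] (x : ℕ → 𝒳) :
    (liminf (fun k : ℕ => liminf (fun n : ℕ => (1 / (k : ℝ)) * Hsw x k n) atTop) atTop
      ≤ liminf (fun k : ℕ => liminf (fun n : ℕ => (1 / (k : ℝ)) * Hblock x k n) atTop) atTop)
    ∧ (limsup (fun k : ℕ => limsup (fun n : ℕ => (1 / (k : ℝ)) * Hsw x k n) atTop) atTop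
      ≤ limsup (fun k : ℕ => limsup (fun n : ℕ => (1 / (k : ℝ)) * Hblock x k n) atTop) atTop) := by
  have hne : Nonempty 𝒳 := ⟨x 0⟩
  have hc1 : 1 ≤ Fintype.card 𝒳 := Fintype.card_pos
  have hB00 : (0:ℝ) ≤ Real.logb 2 (Fintype.card 𝒳) :=
    Real.logb_nonneg one_lt_two (by exact_mod_cast hc1)
  set B₀ : ℝ := Real.logb 2 (Fintype.card 𝒳) with hB₀
  -- pointwise bounds
  have hsw01 : ∀ k n : ℕ, 0 ≤ (1 / (k:ℝ)) * Hsw x k n ∧ (1 / (k:ℝ)) * Hsw x k n ≤ B₀ := by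
    intro k n
    rcases Nat.eq_zero_or_pos k with hk | hk
    · subst hk
      simp only [Nat.cast_zero, div_zero, zero_mul]
      exact ⟨le_refl 0, hB00⟩
    · have h1 : (0:ℝ) < (k:ℝ) := by exact_mod_cast hk
      constructor
      · exact mul_nonneg (by positivity) (SLB.hsw_nonneg x k n)
      · have h2 := SLB.hsw_le x k n
        calc (1 / (k:ℝ)) * Hsw x k n
            ≤ (1 / (k:ℝ)) * ((k:ℝ) * Real.logb 2 (Fintype.card 𝒳)) :=
              mul_le_mul_of_nonneg_left h2 (by positivity)
          _ = B₀ := by rw [hB₀]; field_simp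
  have hbl01 : ∀ k n : ℕ, 0 ≤ (1 / (k:ℝ)) * Hblock x k n ∧ (1 / (k:ℝ)) * Hblock x k n ≤ B₀ := by
    intro k n
    rcases Nat.eq_zero_or_pos k with hk | hk
    · subst hk
      simp only [Nat.cast_zero, div_zero, zero_mul]
      exact ⟨le_refl 0, hB00⟩
    · have h1 : (0:ℝ) < (k:ℝ) := by exact_mod_cast hk
      constructor
      · exact mul_nonneg (by positivity) (SLB.hblock_nonneg x k n)
      · have h2 := SLB.hblock_le x k n hc1
        calc (1 / (k:ℝ)) * Hblock x k n
            ≤ (1 / (k:ℝ)) * ((k:ℝ) * Real.logb 2 (Fintype.card 𝒳)) :=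
              mul_le_mul_of_nonneg_left h2 (by positivity)
          _ = B₀ := by rw [hB₀]; field_simp
  -- inner lim bounds
  have hSWi : ∀ k : ℕ, 0 ≤ liminf (fun n : ℕ => (1 / (k:ℝ)) * Hsw x k n) atTop
      ∧ liminf (fun n : ℕ => (1 / (k:ℝ)) * Hsw x k n) atTop ≤ B₀ := fun k =>
    ⟨SLB.liminf_nonneg (fun n => (hsw01 k n).1) (fun n => (hsw01 k n).2),
     SLB.liminf_le_bound (fun n => (hsw01 k n).1) (fun n => (hsw01 k n).2)⟩
  have hBLi : ∀ k : ℕ, 0 ≤ liminf (fun n : ℕ => (1 / (k:ℝ)) * Hblock x k n) atTop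
      ∧ liminf (fun n : ℕ => (1 / (k:ℝ)) * Hblock x k n) atTop ≤ B₀ := fun k =>
    ⟨SLB.liminf_nonneg (fun n => (hbl01 k n).1) (fun n => (hbl01 k n).2),
     SLB.liminf_le_bound (fun n => (hbl01 k n).1) (fun n => (hbl01 k n).2)⟩
  have hSWs : ∀ k : ℕ, 0 ≤ limsup (fun n : ℕ => (1 / (k:ℝ)) * Hsw x k n) atTop
      ∧ limsup (fun n : ℕ => (1 / (k:ℝ)) * Hsw x k n) atTop ≤ B₀ := fun k =>
    ⟨SLB.limsup_nonneg (fun n => (hsw01 k n).1) (fun n => (hsw01 k n).2),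
     SLB.limsup_le_bound (fun n => (hsw01 k n).1) (fun n => (hsw01 k n).2)⟩
  have hBLs : ∀ k : ℕ, 0 ≤ limsup (fun n : ℕ => (1 / (k:ℝ)) * Hblock x k n) atTop
      ∧ limsup (fun n : ℕ => (1 / (k:ℝ)) * Hblock x k n) atTop ≤ B₀ := fun k =>
    ⟨SLB.limsup_nonneg (fun n => (hbl01 k n).1) (fun n => (hbl01 k n).2),
     SLB.limsup_le_bound (fun n => (hbl01 k n).1) (fun n => (hbl01 k n).2)⟩
  -- logb k / k tendsto 0
  have tlog : Tendsto (fun k : ℕ => Real.logb 2 k / k) atTop (nhds 0) := by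
    have h1 : Tendsto (fun y : ℝ => Real.log y / y) atTop (nhds 0) := by
      have := Real.isLittleO_log_id_atTop.tendsto_div_nhds_zero
      simpa using this
    have h2 := h1.comp (tendsto_natCast_atTop_atTop (R := ℝ))
    have h3 := h2.div_const (Real.log 2)
    have he : (fun k : ℕ => Real.logb 2 k / k)
        = fun k : ℕ => (Real.log k / k) / Real.log 2 := by
      funext k
      rw [Real.logb]
      ring
    rw [he]
    simpa using h3
  constructor
  · -- liminf part
    apply le_of_forall_pos_le_add
    intro ε hε
    obtain ⟨R₀, hR₀⟩ := exists_nat_gt (8 * B₀ / ε)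
    set R : ℕ := R₀ + 1 with hRdef
    have hR1 : 1 ≤ R := by omega
    have hRpos : (0:ℝ) < (R:ℝ) := by exact_mod_cast Nat.succ_pos R₀
    have hRB : (2 / (R:ℝ)) * B₀ ≤ ε / 4 := by
      have hRr : 8 * B₀ / ε < (R:ℝ) := by
        refine lt_of_lt_of_le hR₀ ?_
        exact_mod_cast Nat.le_succ R₀
      have h8 : 8 * B₀ < ε * R := by
        rw [div_lt_iff₀ hε] at hRr
        linarith
      rw [div_mul_eq_mul_div, div_le_div_iff₀ hRpos (by norm_num : (0:ℝ) < 4)]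
      nlinarith
    have evlog : ∀ᶠ k : ℕ in atTop, Real.logb 2 k / k < ε / 4 :=
      Tendsto.eventually_lt_const (by positivity) tlog
    have evk : ∀ᶠ k : ℕ in atTop,
        liminf (fun n : ℕ => (1 / (k:ℝ)) * Hsw x k n) atTop
          ≤ liminf (fun n : ℕ => (1 / ((k / R : ℕ):ℝ)) * Hblock x (k / R) n) atTop
            + ((2 / (R:ℝ)) * B₀ + ε / 2) := by
      filter_upwards [evlog, eventually_ge_atTop (R * R)] with k hklog hkR
      have hev := SLB.perk x R k hR1 hkR (show (0:ℝ) < ε / 4 by positivity)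
      have hin := SLB.liminf_le_liminf_add_const
        (f := fun n : ℕ => (1 / (k:ℝ)) * Hsw x k n)
        (g := fun n : ℕ => (1 / ((k / R : ℕ):ℝ)) * Hblock x (k / R) n)
        (c := Real.logb 2 k / k + (2 / (R:ℝ)) * Real.logb 2 (Fintype.card 𝒳) + ε / 4)
        (B := B₀)
        (hev.mono fun n h => by linarith)
        (fun n => (hsw01 k n).1) (fun n => (hbl01 (k / R) n).1) (fun n => (hbl01 (k / R) n).2)
      rw [← hB₀] at hin
      linarith
    have o1 := SLB.liminf_le_liminf_add_const
      (f := fun k : ℕ => liminf (fun n : ℕ => (1 / (k:ℝ)) * Hsw x k n) atTop)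
      (g := fun k : ℕ =>
        liminf (fun n : ℕ => (1 / ((k / R : ℕ):ℝ)) * Hblock x (k / R) n) atTop)
      (c := (2 / (R:ℝ)) * B₀ + ε / 2) (B := B₀)
      evk (fun k => (hSWi k).1) (fun k => (hBLi (k / R)).1) (fun k => (hBLi (k / R)).2)
    have o2 := SLB.liminf_comp_div_le (R := R) (B := B₀)
      (g := fun m : ℕ => liminf (fun n : ℕ => (1 / (m:ℝ)) * Hblock x m n) atTop)
      (by omega) (fun m => (hBLi m).1) (fun m => (hBLi m).2)
    linarith
  · -- limsup part
    apply le_of_forall_pos_le_add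
    intro ε hε
    obtain ⟨R₀, hR₀⟩ := exists_nat_gt (8 * B₀ / ε)
    set R : ℕ := R₀ + 1 with hRdef
    have hR1 : 1 ≤ R := by omega
    have hRpos : (0:ℝ) < (R:ℝ) := by exact_mod_cast Nat.succ_pos R₀
    have hRB : (2 / (R:ℝ)) * B₀ ≤ ε / 4 := by
      have hRr : 8 * B₀ / ε < (R:ℝ) := by
        refine lt_of_lt_of_le hR₀ ?_
        exact_mod_cast Nat.le_succ R₀
      have h8 : 8 * B₀ < ε * R := by
        rw [div_lt_iff₀ hε] at hRr
        linarith
      rw [div_mul_eq_mul_div, div_le_div_iff₀ hRpos (by norm_num : (0:ℝ) < 4)]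
      nlinarith
    have evlog : ∀ᶠ k : ℕ in atTop, Real.logb 2 k / k < ε / 4 :=
      Tendsto.eventually_lt_const (by positivity) tlog
    have evk : ∀ᶠ k : ℕ in atTop,
        limsup (fun n : ℕ => (1 / (k:ℝ)) * Hsw x k n) atTop
          ≤ limsup (fun n : ℕ => (1 / ((k / R : ℕ):ℝ)) * Hblock x (k / R) n) atTop
            + ((2 / (R:ℝ)) * B₀ + ε / 2) := by
      filter_upwards [evlog, eventually_ge_atTop (R * R)] with k hklog hkR
      have hev := SLB.perk x R k hR1 hkR (show (0:ℝ) < ε / 4 by positivity)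
      have hin := SLB.limsup_le_limsup_add_const
        (f := fun n : ℕ => (1 / (k:ℝ)) * Hsw x k n)
        (g := fun n : ℕ => (1 / ((k / R : ℕ):ℝ)) * Hblock x (k / R) n)
        (c := Real.logb 2 k / k + (2 / (R:ℝ)) * Real.logb 2 (Fintype.card 𝒳) + ε / 4)
        (B := B₀)
        (hev.mono fun n h => by linarith)
        (fun n => (hsw01 k n).1) (fun n => (hbl01 (k / R) n).1) (fun n => (hbl01 (k / R) n).2)
      rw [← hB₀] at hin
      linarith
    have o1 := SLB.limsup_le_limsup_add_const
      (f := fun k : ℕ => limsup (fun n : ℕ => (1 / (k:ℝ)) * Hsw x k n) atTop)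
      (g := fun k : ℕ =>
        limsup (fun n : ℕ => (1 / ((k / R : ℕ):ℝ)) * Hblock x (k / R) n) atTop)
      (c := (2 / (R:ℝ)) * B₀ + ε / 2) (B := B₀)
      evk (fun k => (hSWs k).1) (fun k => (hBLs (k / R)).1) (fun k => (hBLs (k / R)).2)
    have o2 := SLB.limsup_comp_div_le (R := R) (B := B₀)
      (g := fun m : ℕ => limsup (fun n : ℕ => (1 / (m:ℝ)) * Hblock x m n) atTop)
      (by omega) (fun m => (hBLs m).1) (fun m => (hBLs m).2)
    linarith
end

section
/- Let z^∞ be a fixed sequence over a finite alphabet 𝒵 and let θ_1, θ_2, … be drawn iid from a distribution on a finite alphabet Θ. Then for every k ≥ 1, with probability one, Ĥ^k(z^n) + Ĥ^k(θ^n) − Ĥ^k(((z_i, θ_i))_{i=1}^n) → 0 as n → ∞; that is, the k-th order block-by-block empirical mutual information between the fixed sequence z^∞ and the iid sequence θ^∞ vanishes almost surely. -/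
open MeasureTheory ProbabilityTheory Filter
open scoped ENNReal

section AuxProofs

lemma phi_uc : UniformContinuousOn (fun x : ℝ => -(x * Real.logb 2 x)) (Set.Icc 0 1) := by
  have hc : Continuous (fun x : ℝ => -(x * Real.logb 2 x)) := by
    have h1 : Continuous fun x : ℝ => -((x * Real.log x) * (Real.log 2)⁻¹) :=
      ((Real.continuous_mul_log).mul continuous_const).neg
    convert h1 using 2 with x
    rw [Real.logb]; ring
  exact isCompact_Icc.uniformContinuousOn_of_continuous hc.continuousOn

lemma tendsto_phi_sub {a b : ℕ → ℝ} (ha : ∀ n, a n ∈ Set.Icc (0:ℝ) 1)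
    (hb : ∀ n, b n ∈ Set.Icc (0:ℝ) 1)
    (h : Filter.Tendsto (fun n => a n - b n) atTop (nhds 0)) :
    Filter.Tendsto (fun n => -(a n * Real.logb 2 (a n)) - -(b n * Real.logb 2 (b n)))
      atTop (nhds 0) := by
  rw [Metric.tendsto_atTop] at h ⊢
  intro ε hε
  obtain ⟨δ, hδ, hδ'⟩ := (Metric.uniformContinuousOn_iff.mp phi_uc) ε hε
  obtain ⟨N, hN⟩ := h δ hδ
  refine ⟨N, fun n hn => ?_⟩
  have h2 := hδ' (a n) (ha n) (b n) (hb n) (by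
    have := hN n hn
    simpa [Real.dist_eq, sub_zero] using this)
  rw [Real.dist_eq] at h2
  rw [Real.dist_eq, sub_zero]
  exact h2

lemma tendsto_ent2_sub {β : Type*} [Fintype β] {a b : ℕ → β → ℝ}
    (ha : ∀ n x, a n x ∈ Set.Icc (0:ℝ) 1) (hb : ∀ n x, b n x ∈ Set.Icc (0:ℝ) 1)
    (h : ∀ x, Filter.Tendsto (fun n => a n x - b n x) atTop (nhds 0)) :
    Filter.Tendsto (fun n => ent2 (a n) - ent2 (b n)) atTop (nhds 0) := by
  have he : (fun n => ent2 (a n) - ent2 (b n))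
      = fun n => ∑ x, (-(a n x * Real.logb 2 (a n x)) - -(b n x * Real.logb 2 (b n x))) := by
    funext n; rw [ent2, ent2, ← Finset.sum_sub_distrib]
  rw [he]
  have := tendsto_finset_sum (f := fun x n =>
      -(a n x * Real.logb 2 (a n x)) - -(b n x * Real.logb 2 (b n x)))
    Finset.univ (fun x _ => tendsto_phi_sub (fun n => ha n x) (fun n => hb n x) (h x))
  simpa using this

lemma ent2_prod {α β : Type*} [Fintype α] [Fintype β] {q : α → ℝ} {p : β → ℝ}
    (hq0 : ∀ a, 0 ≤ q a) (hp0 : ∀ b, 0 ≤ p b) (hq1 : ∑ a, q a = 1) (hp1 : ∑ b, p b = 1) :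
    ent2 (fun x : α × β => q x.1 * p x.2) = ent2 q + ent2 p := by
  have key : ∀ (x y : ℝ), 0 ≤ x → 0 ≤ y →
      -(x * y * Real.logb 2 (x * y))
        = y * -(x * Real.logb 2 x) + x * -(y * Real.logb 2 y) := by
    intro x y hx hy
    rcases eq_or_lt_of_le hx with h | h
    · simp [← h]
    rcases eq_or_lt_of_le hy with h' | h'
    · simp [← h']
    rw [Real.logb_mul (ne_of_gt h) (ne_of_gt h')]; ring
  have hA : ∀ a, (∑ b, -(q a * p b * Real.logb 2 (q a * p b)))
      = -(q a * Real.logb 2 (q a)) + q a * ent2 p := by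
    intro a
    rw [Finset.sum_congr rfl (fun b _ => key (q a) (p b) (hq0 a) (hp0 b)),
      Finset.sum_add_distrib, ← Finset.sum_mul, hp1, one_mul, ← Finset.mul_sum]
    rfl
  rw [ent2, Fintype.sum_prod_type]
  rw [Finset.sum_congr rfl (fun a _ => hA a), Finset.sum_add_distrib, ← Finset.sum_mul, hq1,
    one_mul]
  rfl

lemma blockDist_mem_Icc {𝒳 : Type*} [DecidableEq 𝒳] (x : ℕ → 𝒳) (k n : ℕ) (w : Fin k → 𝒳) :
    blockDist x k n w ∈ Set.Icc (0:ℝ) 1 := by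
  constructor
  · exact div_nonneg (by positivity) (by positivity)
  · rw [blockDist]
    apply div_le_one_of_le₀
    · exact_mod_cast (Finset.card_filter_le _ _).trans (by simp)
    · positivity

lemma sum_blockDist {𝒳 : Type*} [Fintype 𝒳] [DecidableEq 𝒳] (x : ℕ → 𝒳) (k n : ℕ)
    (hN : n / k ≠ 0) : ∑ w, blockDist x k n w = 1 := by
  unfold blockDist
  rw [← Finset.sum_div]
  have h1 : ∑ w : Fin k → 𝒳, (((Finset.range (n / k)).filter
      (fun i => (fun j : Fin k => x (k * i + (j : ℕ))) = w)).card : ℝ) = ((n / k : ℕ) : ℝ) := by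
    rw [← Nat.cast_sum]
    norm_cast
    rw [← Finset.card_eq_sum_card_fiberwise
      (fun i _ => Finset.mem_univ (fun j : Fin k => x (k * i + (j : ℕ))))]
    simp
  rw [h1, div_self (by exact_mod_cast hN)]

lemma joint_filter_eq {𝒵 Θ' : Type*} [DecidableEq 𝒵] [DecidableEq Θ']
    (x : ℕ → 𝒵) (y : ℕ → Θ') (k n : ℕ) (v : Fin k → 𝒵) (w : Fin k → Θ') :
    (Finset.range (n / k)).filter
        (fun i => (fun j : Fin k => (x (k * i + (j : ℕ)), y (k * i + (j : ℕ))))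
          = fun j => (v j, w j))
      = ((Finset.range (n / k)).filter
          (fun i => (fun j : Fin k => x (k * i + (j : ℕ))) = v)).filter
          (fun i => (fun j : Fin k => y (k * i + (j : ℕ))) = w) := by
  rw [Finset.filter_filter]
  apply Finset.filter_congr
  intro i _
  simp only [funext_iff, Prod.mk.injEq, forall_and]

lemma blockDist_pair {𝒵 Θ' : Type*} [DecidableEq 𝒵] [DecidableEq Θ']
    (x : ℕ → 𝒵) (y : ℕ → Θ') (k n : ℕ) (v : Fin k → 𝒵) (w : Fin k → Θ') :
    blockDist (fun i => (x i, y i)) k n (fun j => (v j, w j))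
      = ((((Finset.range (n / k)).filter
          (fun i => (fun j : Fin k => x (k * i + (j : ℕ))) = v)).filter
          (fun i => (fun j : Fin k => y (k * i + (j : ℕ))) = w)).card : ℝ)
        / ((n / k : ℕ) : ℝ) := by
  rw [blockDist, joint_filter_eq]

lemma sum_blockDist_pair_fst {𝒵 Θ' : Type*} [Fintype 𝒵] [DecidableEq 𝒵] [DecidableEq Θ']
    (x : ℕ → 𝒵) (y : ℕ → Θ') (k n : ℕ) (w : Fin k → Θ') :
    ∑ v : Fin k → 𝒵, blockDist (fun i => (x i, y i)) k n (fun j => (v j, w j))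
      = blockDist y k n w := by
  have h1 : ∀ v : Fin k → 𝒵, blockDist (fun i => (x i, y i)) k n (fun j => (v j, w j))
      = ((((Finset.range (n / k)).filter
          (fun i => (fun j : Fin k => y (k * i + (j : ℕ))) = w)).filter
          (fun i => (fun j : Fin k => x (k * i + (j : ℕ))) = v)).card : ℝ)
        / ((n / k : ℕ) : ℝ) := by
    intro v
    rw [blockDist_pair, Finset.filter_comm]
  rw [Finset.sum_congr rfl (fun v _ => h1 v), ← Finset.sum_div]
  rw [blockDist]
  congr 1
  rw [← Nat.cast_sum]
  norm_cast
  exact (Finset.card_eq_sum_card_fiberwise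
    (fun i _ => Finset.mem_univ (fun j : Fin k => x (k * i + (j : ℕ))))).symm

end AuxProofs

/-- Claim used in the paper's proofs of Theorems 1 and 2: for a fixed sequence `z` over a
finite alphabet and an iid sequence `θ` over a finite alphabet, the `k`-th order
block-by-block empirical mutual information
`Ĥ^k(z^n) + Ĥ^k(θ^n) − Ĥ^k((z,θ)^n)` vanishes almost surely as `n → ∞`, for every `k ≥ 1`. -/
theorem empirical_mutual_information_vanishes
    {Ω : Type*} [MeasurableSpace Ω] (μ : Measure Ω) [IsProbabilityMeasure μ]
    {𝒵 Θ : Type*} [Fintype 𝒵] [DecidableEq 𝒵] [Fintype Θ] [DecidableEq Θ]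
    [MeasurableSpace Θ] [MeasurableSingletonClass Θ]
    (z : ℕ → 𝒵) (θ : ℕ → Ω → Θ) (hθmeas : ∀ i, Measurable (θ i))
    (hθindep : iIndepFun θ μ)
    (hθident : ∀ i j, Measure.map (θ i) μ = Measure.map (θ j) μ)
    (k : ℕ) (hk : 1 ≤ k) :
    ∀ᵐ ω ∂μ,
      Tendsto
        (fun n : ℕ =>
          Hblock z k n + Hblock (fun i => θ i ω) k n
            - Hblock (fun i => (z i, θ i ω)) k n)
        atTop (nhds 0) := by
  have hNtop : Tendsto (fun n : ℕ => n / k) atTop atTop := by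
    apply tendsto_atTop_atTop_of_monotone
    · exact fun m n h => Nat.div_le_div_right h
    · intro b
      exact ⟨b * k, by rw [Nat.mul_div_cancel _ hk]⟩
  have hNR : Tendsto (fun n : ℕ => ((n / k : ℕ) : ℝ)) atTop atTop :=
    tendsto_natCast_atTop_atTop.comp hNtop
  -- blocks of θ
  have htbmeas : ∀ i, Measurable (fun ω => (fun j : Fin k => θ (k * i + (j : ℕ)) ω)) :=
    fun i => measurable_pi_lambda _ (fun j => hθmeas _)
  have hsingle : ∀ m (t : Θ), μ (θ m ⁻¹' {t}) = μ (θ 0 ⁻¹' {t}) := by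
    intro m t
    rw [← Measure.map_apply (hθmeas m) (measurableSet_singleton t),
      ← Measure.map_apply (hθmeas 0) (measurableSet_singleton t), hθident m 0]
  -- law of a block
  have hblocklaw : ∀ i (w : Fin k → Θ),
      μ ((fun ω => (fun j : Fin k => θ (k * i + (j : ℕ)) ω)) ⁻¹' {w})
        = ∏ j, μ (θ 0 ⁻¹' {w j}) := by
    intro i w
    set w' : ℕ → Θ := fun m => if h : m - k * i < k then w ⟨m - k * i, h⟩ else w ⟨0, hk⟩ with hw'
    have hw'j : ∀ j : Fin k, w' (k * i + (j : ℕ)) = w j := by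
      intro j
      rw [hw']
      beta_reduce
      rw [dif_pos (show k * i + (j : ℕ) - k * i < k by omega)]
      exact congrArg w (Fin.ext (show k * i + (j : ℕ) - k * i = (j : ℕ) by omega))
    have hpre : (fun ω => (fun j : Fin k => θ (k * i + (j : ℕ)) ω)) ⁻¹' {w}
        = ⋂ m ∈ Finset.Ico (k * i) (k * i + k), θ m ⁻¹' {w' m} := by
      ext ω
      constructor
      · intro hmem
        have h : ∀ j : Fin k, θ (k * i + (j : ℕ)) ω = w j := by
          have h0 : (fun j : Fin k => θ (k * i + (j : ℕ)) ω) = w := hmem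
          intro j
          exact congrFun h0 j
        simp only [Set.mem_iInter]
        intro m hm
        rw [Finset.mem_Ico] at hm
        have h1 : m - k * i < k := by omega
        rw [Set.mem_preimage]
        rw [hw']
        beta_reduce
        rw [Set.mem_singleton_iff, dif_pos h1]
        have h3 := h ⟨m - k * i, h1⟩
        have h4 : k * i + ((⟨m - k * i, h1⟩ : Fin k) : ℕ) = m := by
          show k * i + (m - k * i) = m
          omega
        rw [h4] at h3
        exact h3
      · intro hmem
        simp only [Set.mem_iInter] at hmem
        show (fun j : Fin k => θ (k * i + (j : ℕ)) ω) = w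
        funext j
        have h3 := hmem (k * i + (j : ℕ))
          (Finset.mem_Ico.mpr ⟨Nat.le_add_right _ _, Nat.add_lt_add_left j.isLt _⟩)
        have h5 : θ (k * i + (j : ℕ)) ω = w' (k * i + (j : ℕ)) := h3
        rw [hw'j j] at h5
        exact h5
    rw [hpre, hθindep.meas_biInter (fun m _ => ⟨{w' m}, measurableSet_singleton _, rfl⟩)]
    rw [Finset.prod_Ico_eq_prod_range]
    have hkk : k * i + k - k * i = k := by omega
    rw [hkk, ← Fin.prod_univ_eq_prod_range (fun m => μ (θ (k * i + m) ⁻¹' {w' (k * i + m)})) k]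
    apply Finset.prod_congr rfl
    intro j _
    rw [hw'j j, hsingle]
  -- limiting distribution
  set pR : (Fin k → Θ) → ℝ := fun w => ∏ j, (μ (θ 0 ⁻¹' {w j})).toReal with hpRdef
  have hpR0 : ∀ w, 0 ≤ pR w := fun w => Finset.prod_nonneg (fun j _ => ENNReal.toReal_nonneg)
  have hpR1 : ∀ w, pR w ≤ 1 := by
    intro w
    apply Finset.prod_le_one (fun j _ => ENNReal.toReal_nonneg)
    intro j _
    have h1 : μ (θ 0 ⁻¹' {w j}) ≤ 1 := prob_le_one
    calc (μ (θ 0 ⁻¹' {w j})).toReal ≤ (1 : ℝ≥0∞).toReal :=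
          ENNReal.toReal_mono (by simp) h1
      _ = 1 := by simp
  have hblockR : ∀ i (w : Fin k → Θ),
      (μ ((fun ω => (fun j : Fin k => θ (k * i + (j : ℕ)) ω)) ⁻¹' {w})).toReal = pR w := by
    intro i w
    rw [hblocklaw i w, ENNReal.toReal_prod]
  have hpRsum : ∑ w : Fin k → Θ, pR w = 1 := by
    have h2 : ∑ t : Θ, (μ (θ 0 ⁻¹' {t})).toReal = 1 := by
      rw [← ENNReal.toReal_sum (fun t _ => measure_ne_top μ _)]
      have h3 : ∑ t ∈ Finset.univ, μ (θ 0 ⁻¹' {t})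
          = μ (θ 0 ⁻¹' ↑(Finset.univ : Finset Θ)) :=
        sum_measure_preimage_singleton _ (fun t _ => hθmeas 0 (measurableSet_singleton t))
      rw [h3]
      simp
    have h4 := Finset.prod_univ_sum (fun _ : Fin k => (Finset.univ : Finset Θ))
      (fun _ t => (μ (θ 0 ⁻¹' {t})).toReal)
    rw [Fintype.piFinset_univ] at h4
    calc ∑ w : Fin k → Θ, pR w
        = ∏ _j : Fin k, ∑ t : Θ, (μ (θ 0 ⁻¹' {t})).toReal := h4.symm
      _ = 1 := by rw [h2]; simp
  -- the key pointwise convergence for each pair of words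
  have key : ∀ (v : Fin k → 𝒵) (w : Fin k → Θ), ∀ᵐ ω ∂μ,
      Tendsto (fun n => blockDist (fun i => (z i, θ i ω)) k n (fun j => (v j, w j))
        - blockDist z k n v * pR w) atTop (nhds 0) := by
    intro v w
    set X : ℕ → Ω → ℝ := fun i ω => if (fun j : Fin k => θ (k * i + (j : ℕ)) ω) = w
      then 1 else 0 with hX
    have hXind : ∀ i, X i = Set.indicator
        ((fun ω => (fun j : Fin k => θ (k * i + (j : ℕ)) ω)) ⁻¹' {w}) (fun _ => (1:ℝ)) := by
      intro i; funext ω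
      by_cases h : (fun j : Fin k => θ (k * i + (j : ℕ)) ω) = w
      · rw [Set.indicator_of_mem (Set.mem_preimage.mpr (by simpa using h))]
        simp [hX, h]
      · rw [Set.indicator_of_notMem (fun hc => h (by simpa using hc))]
        simp [hX, h]
    have hXmeasSet : ∀ i, MeasurableSet
        ((fun ω => (fun j : Fin k => θ (k * i + (j : ℕ)) ω)) ⁻¹' {w}) :=
      fun i => htbmeas i (measurableSet_singleton w)
    have hXint : ∀ i, Integrable (X i) μ := fun i => by
      rw [hXind]; exact (integrable_const (1:ℝ)).indicator (hXmeasSet i)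
    have hXmean : ∀ i, ∫ ω, X i ω ∂μ = pR w := by
      intro i
      rw [hXind, integral_indicator_const _ (hXmeasSet i), smul_eq_mul, mul_one, measureReal_def, hblockR]
    have hXident : ∀ i i', IdentDistrib (X i) (X i') μ μ := by
      intro i i'
      have hbl : IdentDistrib (fun ω => (fun j : Fin k => θ (k * i + (j : ℕ)) ω))
          (fun ω => (fun j : Fin k => θ (k * i' + (j : ℕ)) ω)) μ μ :=
        ⟨(htbmeas i).aemeasurable, (htbmeas i').aemeasurable,
          MeasureTheory.Measure.ext_of_singleton (fun u => by
            rw [Measure.map_apply (htbmeas i) (measurableSet_singleton u),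
              Measure.map_apply (htbmeas i') (measurableSet_singleton u),
              hblocklaw, hblocklaw])⟩
      exact hbl.comp (measurable_of_countable (fun u => if u = w then (1:ℝ) else 0))
    have hXindep : ∀ i i' : ℕ, i ≠ i' → IndepFun (X i) (X i') μ := by
      intro i i' hii
      have hdisj : Disjoint (Finset.Ico (k * i) (k * i + k))
          (Finset.Ico (k * i') (k * i' + k)) := by
        rw [Finset.disjoint_left]
        intro m hm hm'
        rw [Finset.mem_Ico] at hm hm'
        rcases Nat.lt_or_ge i i' with h | h
        · have : k * (i + 1) ≤ k * i' := Nat.mul_le_mul_left k h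
          rw [Nat.mul_add, Nat.mul_one] at this
          omega
        · have h2 : i' < i := lt_of_le_of_ne h (Ne.symm hii)
          have : k * (i' + 1) ≤ k * i := Nat.mul_le_mul_left k h2
          rw [Nat.mul_add, Nat.mul_one] at this
          omega
      have base := hθindep.indepFun_finset _ _ hdisj hθmeas
      have hcomp : ∀ a : ℕ, X a = (fun h : ({x // x ∈ Finset.Ico (k * a) (k * a + k)} → Θ) =>
          if (fun j : Fin k => h ⟨k * a + (j : ℕ), Finset.mem_Ico.mpr
            ⟨Nat.le_add_right _ _, Nat.add_lt_add_left j.isLt _⟩⟩) = w then (1:ℝ) else 0)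
          ∘ (fun ω (m : {x // x ∈ Finset.Ico (k * a) (k * a + k)}) => θ (m : ℕ) ω) := by
        intro a; rfl
      rw [hcomp i, hcomp i']
      exact base.comp (measurable_of_countable _) (measurable_of_countable _)
    -- the algebraic identity
    have hID : ∀ (ω : Ω) (n : ℕ),
        blockDist (fun i => (z i, θ i ω)) k n (fun j => (v j, w j))
          - blockDist z k n v * pR w
        = (∑ i ∈ (Finset.range (n / k)).filter
              (fun i => (fun j : Fin k => z (k * i + (j : ℕ))) = v),
            (X i ω - pR w)) / ((n / k : ℕ) : ℝ) := by
      intro ω n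
      rw [blockDist_pair, blockDist]
      rw [Finset.sum_sub_distrib, Finset.sum_const, nsmul_eq_mul, sub_div]
      congr 1
      · congr 1
        rw [Finset.card_filter]
        push_cast
        apply Finset.sum_congr rfl
        intro i _
        rfl
      · rw [div_mul_eq_mul_div]
    by_cases hinf : (setOf (fun i => (fun j : Fin k => z (k * i + (j : ℕ))) = v)).Infinite
    · -- infinite case : SLLN along the subsequence
      set Sp : ℕ → Prop := fun i => (fun j : Fin k => z (k * i + (j : ℕ))) = v with hSp
      have hY := strong_law_ae_real (fun m => X (Nat.nth Sp m)) (hXint _)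
        (fun m m' hmm' => hXindep _ _ ((Nat.nth_injective hinf).ne hmm'))
        (fun m => hXident _ _)
      rw [hXmean] at hY
      filter_upwards [hY] with ω hω
      have hb : Tendsto (fun M : ℕ =>
          (∑ m ∈ Finset.range M, (X (Nat.nth Sp m) ω - pR w)) / (M : ℝ)) atTop (nhds 0) := by
        have h1 : Tendsto (fun M : ℕ =>
            (∑ m ∈ Finset.range M, X (Nat.nth Sp m) ω) / (M : ℝ) - pR w) atTop (nhds 0) := by
          have h2 := hω.sub_const (pR w)
          simpa using h2
        apply h1.congr'
        filter_upwards [eventually_ge_atTop 1] with M hM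
        have hM0 : (M : ℝ) ≠ 0 := by
          have : 0 < M := hM
          positivity
        rw [Finset.sum_sub_distrib, Finset.sum_const, Finset.card_range, nsmul_eq_mul, sub_div,
          mul_div_cancel_left₀ _ hM0]
      have hctop : Tendsto (fun n : ℕ => Nat.count Sp (n / k)) atTop atTop := by
        apply (tendsto_atTop_atTop_of_monotone (Nat.count_monotone Sp) ?_).comp hNtop
        intro b
        refine ⟨Nat.nth Sp b + 1, ?_⟩
        rw [Nat.count_nth_succ_of_infinite hinf]
        omega
      refine squeeze_zero_norm (a := fun n =>
          |(∑ m ∈ Finset.range (Nat.count Sp (n / k)), (X (Nat.nth Sp m) ω - pR w))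
            / ((Nat.count Sp (n / k) : ℕ) : ℝ)|) ?_ ?_
      swap
      · have h5 := (hb.comp hctop).abs
        simpa using h5
      intro n
      beta_reduce
      rw [hID ω n]
      have hsum : ∑ i ∈ (Finset.range (n / k)).filter
            (fun i => (fun j : Fin k => z (k * i + (j : ℕ))) = v), (X i ω - pR w)
          = ∑ m ∈ Finset.range (Nat.count Sp (n / k)), (X (Nat.nth Sp m) ω - pR w) := by
        apply Finset.sum_nbij' (i := fun i => Nat.count Sp i) (j := fun m => Nat.nth Sp m)
        · intro a ha
          rw [Finset.mem_filter, Finset.mem_range] at ha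
          rw [Finset.mem_range]
          exact Nat.count_strict_mono ha.2 ha.1
        · intro m hm
          rw [Finset.mem_range] at hm
          rw [Finset.mem_filter, Finset.mem_range]
          exact ⟨Nat.nth_lt_of_lt_count hm, Nat.nth_mem_of_infinite hinf m⟩
        · intro a ha
          rw [Finset.mem_filter] at ha
          exact Nat.nth_count ha.2
        · intro m hm
          exact Nat.count_nth_of_infinite hinf m
        · intro a ha
          rw [Finset.mem_filter] at ha
          rw [Nat.nth_count ha.2]
      rw [hsum, Real.norm_eq_abs]
      rcases Nat.eq_zero_or_pos (Nat.count Sp (n / k)) with hc0 | hcpos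
      · rw [hc0]
        simp
      · have hcle : Nat.count Sp (n / k) ≤ n / k := Nat.count_le Sp
        rw [abs_div, abs_div]
        have h6 : |((Nat.count Sp (n / k) : ℕ) : ℝ)| = ((Nat.count Sp (n / k) : ℕ) : ℝ) :=
          abs_of_nonneg (by positivity)
        have h7 : |((n / k : ℕ) : ℝ)| = ((n / k : ℕ) : ℝ) := abs_of_nonneg (by positivity)
        rw [h6, h7]
        apply div_le_div_of_nonneg_left (abs_nonneg _) (by exact_mod_cast hcpos)
        exact_mod_cast hcle
    · -- finite case
      have hfin := Set.not_infinite.mp hinf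
      apply Filter.Eventually.of_forall
      intro ω
      refine squeeze_zero_norm
        (a := fun n => ((hfin.toFinset.card : ℕ) : ℝ) / ((n / k : ℕ) : ℝ)) ?_ ?_
      swap
      · exact Tendsto.div_atTop tendsto_const_nhds hNR
      intro n
      rw [hID ω n, Real.norm_eq_abs]
      rcases Nat.eq_zero_or_pos (n / k) with hn0 | hnpos
      · rw [hn0]
        simp
      · rw [abs_div, abs_of_nonneg (show (0:ℝ) ≤ ((n / k : ℕ) : ℝ) by positivity)]
        have hNpos : (0:ℝ) < ((n / k : ℕ) : ℝ) := by exact_mod_cast hnpos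
        rw [div_le_div_iff_of_pos_right hNpos]
        calc |∑ i ∈ (Finset.range (n / k)).filter
              (fun i => (fun j : Fin k => z (k * i + (j : ℕ))) = v), (X i ω - pR w)|
            ≤ ∑ i ∈ (Finset.range (n / k)).filter
              (fun i => (fun j : Fin k => z (k * i + (j : ℕ))) = v), |X i ω - pR w| :=
              Finset.abs_sum_le_sum_abs _ _
          _ ≤ ∑ i ∈ (Finset.range (n / k)).filter
              (fun i => (fun j : Fin k => z (k * i + (j : ℕ))) = v), 1 := by
              apply Finset.sum_le_sum
              intro i _
              rw [hX]
              by_cases h : (fun j : Fin k => θ (k * i + (j : ℕ)) ω) = w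
              · simp only [h, if_pos]
                rw [abs_le]
                constructor <;> simp <;> [linarith [hpR1 w]; linarith [hpR0 w]]
              · simp only [h, if_neg, if_false]
                rw [abs_le]
                constructor <;> simp <;> [linarith [hpR1 w]; linarith [hpR0 w]]
          _ = (((Finset.range (n / k)).filter
              (fun i => (fun j : Fin k => z (k * i + (j : ℕ))) = v)).card : ℝ) := by
              rw [Finset.sum_const, nsmul_eq_mul, mul_one]
          _ ≤ ((hfin.toFinset.card : ℕ) : ℝ) := by
              have hsub : (Finset.range (n / k)).filter
                  (fun i => (fun j : Fin k => z (k * i + (j : ℕ))) = v) ⊆ hfin.toFinset := by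
                intro i hi
                rw [Finset.mem_filter] at hi
                rw [Set.Finite.mem_toFinset]
                exact hi.2
              exact_mod_cast Finset.card_le_card hsub
  -- combine over all word pairs
  have hae : ∀ᵐ ω ∂μ, ∀ (v : Fin k → 𝒵) (w : Fin k → Θ),
      Tendsto (fun n => blockDist (fun i => (z i, θ i ω)) k n (fun j => (v j, w j))
        - blockDist z k n v * pR w) atTop (nhds 0) := by
    rw [ae_all_iff]
    intro v
    rw [ae_all_iff]
    intro w
    exact key v w
  filter_upwards [hae] with ω hω
  have hev : ∀ᶠ n : ℕ in atTop, n / k ≠ 0 :=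
    (hNtop.eventually_ge_atTop 1).mono (fun n hn => by omega)
  -- piece 1
  have piece1 : Tendsto (fun n => ent2 (blockDist (fun i => θ i ω) k n) - ent2 pR)
      atTop (nhds 0) := by
    apply tendsto_ent2_sub (fun n x => blockDist_mem_Icc _ _ _ _)
      (fun n x => ⟨hpR0 x, hpR1 x⟩)
    intro w'
    have hs : Tendsto (fun n => ∑ v' : Fin k → 𝒵,
        (blockDist (fun i => (z i, θ i ω)) k n (fun j => (v' j, w' j))
          - blockDist z k n v' * pR w')) atTop (nhds 0) := by
      have := tendsto_finset_sum (f := fun (v' : Fin k → 𝒵) n =>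
          blockDist (fun i => (z i, θ i ω)) k n (fun j => (v' j, w' j))
            - blockDist z k n v' * pR w')
        Finset.univ (fun v' _ => hω v' w')
      simpa using this
    apply hs.congr'
    filter_upwards [hev] with n hn
    rw [Finset.sum_sub_distrib, ← Finset.sum_mul, sum_blockDist_pair_fst,
      sum_blockDist z k n hn, one_mul]
  -- piece 2
  have piece2 : Tendsto (fun n =>
      ent2 (fun u : Fin k → 𝒵 × Θ =>
        blockDist z k n (fun j => (u j).1) * pR (fun j => (u j).2))
      - ent2 (blockDist (fun i => (z i, θ i ω)) k n)) atTop (nhds 0) := by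
    refine tendsto_ent2_sub ?_ (fun n x => blockDist_mem_Icc _ _ _ _) ?_
    · intro n u
      constructor
      · exact mul_nonneg (blockDist_mem_Icc _ _ _ _).1 (hpR0 _)
      · exact mul_le_one₀ (blockDist_mem_Icc _ _ _ _).2 (hpR0 _) (hpR1 _)
    intro u
    have h3 := (hω (fun j => (u j).1) (fun j => (u j).2)).neg
    rw [neg_zero] at h3
    apply h3.congr
    intro n
    have hu : (fun j : Fin k => ((u j).1, (u j).2)) = u := by
      funext j
      rfl
    rw [hu]
    ring
  -- piece 3
  have piece3 : Tendsto (fun n => ent2 (blockDist z k n) + ent2 pR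
      - ent2 (fun u : Fin k → 𝒵 × Θ =>
          blockDist z k n (fun j => (u j).1) * pR (fun j => (u j).2))) atTop (nhds 0) := by
    apply Tendsto.congr' ?_ (tendsto_const_nhds (x := (0:ℝ)))
    filter_upwards [hev] with n hn
    have he := Equiv.sum_comp (Equiv.arrowProdEquivProdArrow (Fin k) (fun _ => 𝒵) (fun _ => Θ))
      (fun vw : (Fin k → 𝒵) × (Fin k → Θ) =>
        -((blockDist z k n vw.1 * pR vw.2) * Real.logb 2 (blockDist z k n vw.1 * pR vw.2)))
    have h8 : ent2 (fun u : Fin k → 𝒵 × Θ =>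
        blockDist z k n (fun j => (u j).1) * pR (fun j => (u j).2))
        = ent2 (fun vw : (Fin k → 𝒵) × (Fin k → Θ) => blockDist z k n vw.1 * pR vw.2) := by
      rw [ent2, ent2]
      exact he
    rw [h8, ent2_prod (fun a => (blockDist_mem_Icc _ _ _ _).1) hpR0
      (sum_blockDist z k n hn) hpRsum]
    ring
  have hsum := (piece1.add piece2).add piece3
  rw [add_zero, add_zero] at hsum
  apply hsum.congr
  intro n
  simp only [Hblock]
  ring
end

section
/- Let x^∞ be a sequence over a finite alphabet 𝒳 and fix integers m, N ≥ 1. Then limsup_{n→∞} Ĥ^m(x^n) = limsup_{k→∞} Ĥ^m(x^{kN}) and liminf_{n→∞} Ĥ^m(x^n) = liminf_{k→∞} Ĥ^m(x^{kN}); that is, the limit superior and limit inferior of the m-th order block-by-block empirical entropy are unchanged when computed only along the arithmetic subsequence of times n = kN. -/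
open Filter

/-- count of blocks among the first `q` equal to `w` -/
def cntAux {𝒳 : Type*} [DecidableEq 𝒳] (x : ℕ → 𝒳) (m : ℕ) (w : Fin m → 𝒳) (q : ℕ) : ℕ :=
  ((Finset.range q).filter (fun i => (fun j : Fin m => x (m * i + (j : ℕ))) = w)).card

lemma blockDist_eq_cntAux {𝒳 : Type*} [DecidableEq 𝒳] (x : ℕ → 𝒳) (m n : ℕ) (w : Fin m → 𝒳) :
    blockDist x m n w = (cntAux x m w (n / m) : ℝ) / ((n / m : ℕ) : ℝ) := rfl

lemma cntAux_le {𝒳 : Type*} [DecidableEq 𝒳] (x : ℕ → 𝒳) (m : ℕ) (w : Fin m → 𝒳) (q : ℕ) :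
    cntAux x m w q ≤ q := by
  simpa [cntAux] using Finset.card_filter_le (Finset.range q) _

lemma cntAux_mono {𝒳 : Type*} [DecidableEq 𝒳] (x : ℕ → 𝒳) (m : ℕ) (w : Fin m → 𝒳)
    {q' q : ℕ} (h : q' ≤ q) : cntAux x m w q' ≤ cntAux x m w q :=
  Finset.card_le_card (Finset.filter_subset_filter _ (Finset.range_subset_range.2 h))

lemma cntAux_lip {𝒳 : Type*} [DecidableEq 𝒳] (x : ℕ → 𝒳) (m : ℕ) (w : Fin m → 𝒳)
    {q' q : ℕ} (h : q' ≤ q) : cntAux x m w q ≤ cntAux x m w q' + (q - q') := by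
  classical
  set P := (fun i => (fun j : Fin m => x (m * i + (j : ℕ))) = w)
  have hsub : (Finset.range q).filter P ⊆ (Finset.range q').filter P ∪ Finset.Ico q' q := by
    intro i hi
    simp only [Finset.mem_filter, Finset.mem_range] at hi
    simp only [Finset.mem_union, Finset.mem_filter, Finset.mem_range, Finset.mem_Ico]
    rcases lt_or_ge i q' with h' | h'
    · exact Or.inl ⟨h', hi.2⟩
    · exact Or.inr ⟨h', hi.1⟩
  calc ((Finset.range q).filter P).card
      ≤ ((Finset.range q').filter P ∪ Finset.Ico q' q).card := Finset.card_le_card hsub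
    _ ≤ ((Finset.range q').filter P).card + (q - q') := by
        simpa [Nat.card_Ico] using
          Finset.card_union_le ((Finset.range q').filter P) (Finset.Ico q' q)

lemma ent2_continuous {β : Type*} [Fintype β] : Continuous (ent2 (β := β)) := by
  unfold ent2
  apply continuous_finset_sum
  intro b _
  apply Continuous.neg
  have h : Continuous fun p : β → ℝ => (p b * Real.log (p b)) / Real.log 2 :=
    (Real.continuous_mul_log.comp (continuous_apply b)).div_const _
  simpa [Real.logb, mul_div_assoc] using h

lemma ratio_est (c' c q' q D : ℕ) (h1 : c' ≤ q') (h2 : c' ≤ c) (h3 : c ≤ c' + D)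
    (h4 : q' ≤ q) (h5 : 1 ≤ q') (h6 : q ≤ q' + D) :
    |(c : ℝ) / q - (c' : ℝ) / q'| ≤ (D : ℝ) / q' := by
  have hq' : (0 : ℝ) < q' := by exact_mod_cast h5
  have hq : (0 : ℝ) < q := lt_of_lt_of_le hq' (by exact_mod_cast h4)
  have hc : (c : ℝ) ≤ c' + D := by exact_mod_cast h3
  have hc2 : (c' : ℝ) ≤ c := by exact_mod_cast h2
  have hc1 : (c' : ℝ) ≤ q' := by exact_mod_cast h1
  have hq4 : (q' : ℝ) ≤ q := by exact_mod_cast h4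
  have hq6 : (q : ℝ) ≤ q' + D := by exact_mod_cast h6
  rw [div_sub_div _ _ hq.ne' hq'.ne', abs_div, abs_of_pos (mul_pos hq hq')]
  rw [div_le_div_iff₀ (mul_pos hq hq') hq']
  have hkey : |(c : ℝ) * q' - q * c'| ≤ D * q' := by
    rw [abs_le]
    constructor <;> nlinarith
  calc |(c : ℝ) * q' - q * c'| * q' ≤ (D * q') * q' := by
        apply mul_le_mul_of_nonneg_right hkey hq'.le
    _ ≤ (D : ℝ) * (q * q') := by nlinarith [abs_nonneg ((c:ℝ)*q' - q*c')]

lemma limsup_liminf_eq_of_sub {u v : ℕ → ℝ}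
    (h : Tendsto (fun n => u n - v n) atTop (nhds 0))
    (hu₁ : IsBoundedUnder (· ≤ ·) atTop u) (hu₂ : IsBoundedUnder (· ≥ ·) atTop u)
    (hv₁ : IsBoundedUnder (· ≤ ·) atTop v) (hv₂ : IsBoundedUnder (· ≥ ·) atTop v) :
    limsup u atTop = limsup v atTop ∧ liminf u atTop = liminf v atTop := by
  have le_of_eps : ∀ a b : ℝ, (∀ ε : ℝ, 0 < ε → a ≤ b + ε) → a ≤ b := by
    intro a b hab
    by_contra hlt
    push_neg at hlt
    have := hab ((a - b) / 2) (by linarith)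
    linarith
  have hev : ∀ ε : ℝ, 0 < ε → ∀ᶠ n in atTop, |u n - v n| < ε := by
    intro ε hε
    have := Metric.tendsto_nhds.mp h ε hε
    simpa [Real.dist_eq] using this
  have haddb : ∀ (w : ℕ → ℝ) (ε : ℝ), IsBoundedUnder (· ≤ ·) atTop w →
      IsBoundedUnder (· ≤ ·) atTop (fun n => w n + ε) := by
    intro w ε ⟨b, hb⟩
    rw [eventually_map] at hb
    refine ⟨b + ε, ?_⟩
    rw [eventually_map]
    filter_upwards [hb] with n hn
    exact add_le_add_left hn ε
  constructor
  · apply le_antisymm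
    · apply le_of_eps
      intro ε hε
      have h1 : limsup u atTop ≤ limsup (fun n => v n + ε) atTop :=
        limsup_le_limsup ((hev ε hε).mono fun n hn => by
          obtain ⟨h1', h2'⟩ := abs_lt.mp hn; show u n ≤ v n + ε; linarith)
          hu₂.isCoboundedUnder_le (haddb v ε hv₁)
      rwa [limsup_add_const atTop v ε hv₁ hv₂.isCoboundedUnder_le] at h1
    · apply le_of_eps
      intro ε hε
      have h1 : limsup v atTop ≤ limsup (fun n => u n + ε) atTop :=
        limsup_le_limsup ((hev ε hε).mono fun n hn => by
          obtain ⟨h1', h2'⟩ := abs_lt.mp hn; show v n ≤ u n + ε; linarith)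
          hv₂.isCoboundedUnder_le (haddb u ε hu₁)
      rwa [limsup_add_const atTop u ε hu₁ hu₂.isCoboundedUnder_le] at h1
  · apply le_antisymm
    · apply le_of_eps
      intro ε hε
      have h1 : liminf u atTop ≤ liminf (fun n => v n + ε) atTop :=
        liminf_le_liminf ((hev ε hε).mono fun n hn => by
          obtain ⟨h1', h2'⟩ := abs_lt.mp hn; show u n ≤ v n + ε; linarith)
          hu₂ ((haddb v ε hv₁).isCoboundedUnder_ge)
      rwa [liminf_add_const atTop v ε hv₁.isCoboundedUnder_ge hv₂] at h1
    · apply le_of_eps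
      intro ε hε
      have h1 : liminf v atTop ≤ liminf (fun n => u n + ε) atTop :=
        liminf_le_liminf ((hev ε hε).mono fun n hn => by
          obtain ⟨h1', h2'⟩ := abs_lt.mp hn; show v n ≤ u n + ε; linarith)
          hv₂ ((haddb u ε hu₁).isCoboundedUnder_ge)
      rwa [liminf_add_const atTop u ε hu₁.isCoboundedUnder_ge hu₂] at h1

/-- Identity used in the proof of the paper's Theorem 3: the limsup and liminf of the
`m`-th order block-by-block empirical entropy are unchanged when computed only along the
arithmetic subsequence of times `n = k·N`. -/
theorem Hblock_along_multiples {𝒳 : Type*} [Fintype 𝒳] [DecidableEq 𝒳] (x : ℕ → 𝒳)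
    (m N : ℕ) (hm : 1 ≤ m) (hN : 1 ≤ N) :
    (limsup (fun n : ℕ => Hblock x m n) atTop
      = limsup (fun k : ℕ => Hblock x m (k * N)) atTop)
    ∧ (liminf (fun n : ℕ => Hblock x m n) atTop
      = liminf (fun k : ℕ => Hblock x m (k * N)) atTop) := by
  classical
  set β := (Fin m → 𝒳)
  set K : Set (β → ℝ) := Set.Icc 0 1 with hKdef
  -- distributions lie in K
  have hmem : ∀ n : ℕ, blockDist x m n ∈ K := by
    intro n
    constructor
    · intro w
      exact div_nonneg (Nat.cast_nonneg _) (Nat.cast_nonneg _)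
    · intro w
      show blockDist x m n w ≤ 1
      rw [blockDist_eq_cntAux]
      rcases Nat.eq_zero_or_pos (n / m) with hq | hq
      · simp [hq]
      · rw [div_le_one (by exact_mod_cast hq)]
        exact_mod_cast cntAux_le x m w (n / m)
  have hK : IsCompact K := isCompact_Icc
  have hKne : K.Nonempty := ⟨0, by constructor <;> intro b <;> norm_num⟩
  have hcont : Continuous (ent2 (β := β)) := ent2_continuous
  -- uniform continuity on K
  have huc := hK.uniformContinuousOn_of_continuous hcont.continuousOn
  rw [Metric.uniformContinuousOn_iff] at huc
  -- bounds on ent2 over K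
  obtain ⟨pmax, -, hpmax⟩ := hK.exists_isMaxOn hKne hcont.continuousOn
  obtain ⟨pmin, -, hpmin⟩ := hK.exists_isMinOn hKne hcont.continuousOn
  set f : ℕ → ℝ := fun n => Hblock x m n with hf
  set g : ℕ → ℝ := fun k => Hblock x m (k * N) with hg
  have hfb₁ : IsBoundedUnder (· ≤ ·) atTop f :=
    isBoundedUnder_of ⟨ent2 pmax, fun n => hpmax (hmem n)⟩
  have hfb₂ : IsBoundedUnder (· ≥ ·) atTop f :=
    isBoundedUnder_of ⟨ent2 pmin, fun n => hpmin (hmem n)⟩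
  have hgb₁ : IsBoundedUnder (· ≤ ·) atTop (fun n : ℕ => g (n / N)) :=
    isBoundedUnder_of ⟨ent2 pmax, fun n => hpmax (hmem _)⟩
  have hgb₂ : IsBoundedUnder (· ≥ ·) atTop (fun n : ℕ => g (n / N)) :=
    isBoundedUnder_of ⟨ent2 pmin, fun n => hpmin (hmem _)⟩
  -- the key tendsto fact
  have htend : Tendsto (fun n : ℕ => f n - g (n / N)) atTop (nhds 0) := by
    rw [NormedAddCommGroup.tendsto_nhds_zero]
    intro ε hε
    obtain ⟨δ, hδ, hδ'⟩ := huc ε hε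
    obtain ⟨K₀, hK₀⟩ := exists_nat_gt ((N : ℝ) / δ)
    have hK₀1 : (0:ℝ) ≤ K₀ := le_trans (div_nonneg (Nat.cast_nonneg _) hδ.le) hK₀.le
    rw [eventually_atTop]
    refine ⟨N * m * (K₀ + 1), fun n hn => ?_⟩
    -- abbreviations
    set q' : ℕ := (n / N * N) / m with hq'def
    set q : ℕ := n / m with hqdef
    have hq'q : q' ≤ q := Nat.div_le_div_right (Nat.div_mul_le_self n N)
    have hqq' : q ≤ q' + N := by
      have h1 : n ≤ n / N * N + N := by
        have h2 := Nat.div_add_mod n N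
        have h3 := Nat.mod_lt n (show 0 < N from hN)
        have h4 : n / N * N = N * (n / N) := mul_comm _ _
        omega
      calc q = n / m := rfl
        _ ≤ (n / N * N + N) / m := Nat.div_le_div_right h1
        _ ≤ (n / N * N + N * m) / m := Nat.div_le_div_right (by nlinarith)
        _ = q' + N := by rw [Nat.add_mul_div_right _ _ (show 0 < m from hm)]
    have hq'big : K₀ + 1 ≤ q' := by
      have h1 : K₀ + 1 ≤ n / (N * m) := by
        rw [Nat.le_div_iff_mul_le (by positivity)]
        calc (K₀ + 1) * (N * m) = N * m * (K₀ + 1) := by ring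
          _ ≤ n := hn
      calc K₀ + 1 ≤ n / (N * m) := h1
        _ = n / N / m := (Nat.div_div_eq_div_mul n N m).symm
        _ ≤ (n / N * N) / m := Nat.div_le_div_right (Nat.le_mul_of_pos_right _ hN)
    have hq'pos : 1 ≤ q' := le_trans (by omega) hq'big
    -- coordinatewise bound
    have hcoord : ∀ w : β, |blockDist x m n w - blockDist x m (n / N * N) w|
        ≤ (N : ℝ) / q' := by
      intro w
      rw [blockDist_eq_cntAux, blockDist_eq_cntAux]
      exact ratio_est (cntAux x m w q') (cntAux x m w q) q' q N
        (cntAux_le x m w q') (cntAux_mono x m w hq'q)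
        (by have := cntAux_lip x m w hq'q; omega)
        hq'q hq'pos hqq'
    have hdistK : dist (blockDist x m n) (blockDist x m (n / N * N)) < δ := by
      have hle : dist (blockDist x m n) (blockDist x m (n / N * N)) ≤ (N : ℝ) / q' := by
        rw [dist_pi_le_iff (div_nonneg (Nat.cast_nonneg _) (Nat.cast_nonneg _))]
        intro w
        rw [Real.dist_eq]
        exact hcoord w
      refine lt_of_le_of_lt hle ?_
      rw [div_lt_iff₀ (by exact_mod_cast hq'pos)]
      have hq'R : ((K₀ : ℝ) + 1) ≤ (q' : ℝ) := by exact_mod_cast hq'big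
      calc (N : ℝ) < δ * K₀ + δ := by
            rw [div_lt_iff₀ hδ] at hK₀; linarith
        _ = δ * (K₀ + 1) := by ring
        _ ≤ δ * q' := by nlinarith
    have := hδ' _ (hmem n) _ (hmem (n / N * N)) hdistK
    rw [Real.dist_eq] at this
    simpa [hf, hg, Hblock] using this
  obtain ⟨hsup, hinf⟩ := limsup_liminf_eq_of_sub htend hfb₁ hfb₂ hgb₁ hgb₂
  have hmap : map (fun n : ℕ => n / N) atTop = atTop :=
    map_div_atTop_eq_nat N hN
  have hsup2 : limsup (fun n : ℕ => g (n / N)) atTop = limsup g atTop := by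
    show (map (g ∘ fun n : ℕ => n / N) atTop).limsSup = (map g atTop).limsSup
    rw [← Filter.map_map, hmap]
  have hinf2 : liminf (fun n : ℕ => g (n / N)) atTop = liminf g atTop := by
    show (map (g ∘ fun n : ℕ => n / N) atTop).limsInf = (map g atTop).limsInf
    rw [← Filter.map_map, hmap]
  exact ⟨hsup.trans hsup2, hinf.trans hinf2⟩
end
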